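/- arXiv:2412.11352 — 2 statements merged into one kernel-verified Lean document; each statement's English description precedes it below -/
import Mathlib

section
/- Let X be an NPC space, let G be a locally compact group acting continuously by isometries on X, and let g ∈ G have unbounded action on X with an attracting point ξ ∈ ∂X. Then par_G(g⁻¹) ≤ G_ξ. If moreover g is hyperbolic and the action of G on X is proper, then par_G(g⁻¹) = G_ξ. -/
open Filter Set Topology Pointwise MeasureTheory

section MetricDefs

variable {X : Type*} [MetricSpace X]

/-- `γ` restricted to `s` is a unit-speed geodesic (isometric embedding of `s ⊆ ℝ`). -/
def IsGeodesicOn (γ : ℝ → X) (s : Set ℝ) : Prop :=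
  ∀ u ∈ s, ∀ v ∈ s, dist (γ u) (γ v) = |u - v|

/-- A geodesic segment parametrized by arclength on `[a,b]`, from `x` to `y`. -/
def IsGeodesicSegment (γ : ℝ → X) (a b : ℝ) (x y : X) : Prop :=
  a ≤ b ∧ γ a = x ∧ γ b = y ∧ IsGeodesicOn γ (Set.Icc a b)

/-- A geodesic metric space: any two points are joined by a geodesic. -/
def GeodesicSpace (X : Type*) [MetricSpace X] : Prop :=
  ∀ x y : X, ∃ γ : ℝ → X, IsGeodesicSegment γ 0 (dist x y) x y

/-- A geodesic ray (unit-speed on `[0,∞)`). -/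
def IsGeodesicRay (γ : ℝ → X) : Prop := IsGeodesicOn γ (Set.Ici 0)

/-- A geodesic line (unit-speed on all of `ℝ`). -/
def IsGeodesicLine (γ : ℝ → X) : Prop := IsGeodesicOn γ Set.univ

/-- CAT(0) space, via the CN (Bruhat–Tits) inequality, equivalent to the CAT(0)
comparison-triangle inequality for geodesic spaces. -/
def CAT0 (X : Type*) [MetricSpace X] : Prop :=
  GeodesicSpace X ∧ ∀ x y z m : X, dist y m = dist y z / 2 → dist z m = dist y z / 2 →
    dist x m ^ 2 ≤ (dist x y ^ 2 + dist x z ^ 2) / 2 - dist y z ^ 2 / 4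

/-- All geodesic triangles are `δ`-thin: each point on one side lies within `δ` of the
union of the other two sides. -/
def SlimTriangles (X : Type*) [MetricSpace X] (δ : ℝ) : Prop :=
  ∀ (x y z : X) (γ₁ γ₂ γ₃ : ℝ → X),
    IsGeodesicSegment γ₁ 0 (dist x y) x y →
    IsGeodesicSegment γ₂ 0 (dist y z) y z →
    IsGeodesicSegment γ₃ 0 (dist z x) z x →
    ∀ s ∈ Set.Icc (0:ℝ) (dist x y),
      ∃ p ∈ γ₂ '' Set.Icc (0:ℝ) (dist y z) ∪ γ₃ '' Set.Icc (0:ℝ) (dist z x),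
        dist (γ₁ s) p ≤ δ

/-- Gromov `δ`-hyperbolic (δ-thin geodesic triangles). -/
def GromovHyperbolic (X : Type*) [MetricSpace X] (δ : ℝ) : Prop :=
  0 ≤ δ ∧ SlimTriangles X δ

/-- An NPC space: a geodesic space that is either complete CAT(0), or proper and
Gromov-hyperbolic. -/
def NPCSpace (X : Type*) [MetricSpace X] : Prop :=
  GeodesicSpace X ∧
    ((CompleteSpace X ∧ CAT0 X) ∨ (ProperSpace X ∧ ∃ δ : ℝ, GromovHyperbolic X δ))

/-- Uniquely geodesic space. -/
def UniquelyGeodesic (X : Type*) [MetricSpace X] : Prop :=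
  ∀ (x y : X) (γ₁ γ₂ : ℝ → X), IsGeodesicSegment γ₁ 0 (dist x y) x y →
    IsGeodesicSegment γ₂ 0 (dist x y) x y → ∀ t ∈ Set.Icc (0:ℝ) (dist x y), γ₁ t = γ₂ t

/-- Two rays are asymptotic: they stay at bounded distance. -/
def AsympRays (γ₁ γ₂ : ℝ → X) : Prop :=
  ∃ C : ℝ, ∀ t : ℝ, 0 ≤ t → dist (γ₁ t) (γ₂ t) ≤ C

/-- The boundary points of the rays `γ₁, γ₂` are opposite: some geodesic line has
`γ₁`'s class as backward endpoint and `γ₂`'s class as forward endpoint. -/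
def OppositeEnds (γ₁ γ₂ : ℝ → X) : Prop :=
  ∃ L : ℝ → X, IsGeodesicLine L ∧ AsympRays (fun t => L (-t)) γ₁ ∧ AsympRays L γ₂

/-- The sequence `x` converges to the boundary point represented by the ray `γ`:
it goes to infinity and geodesic segments from `γ 0` to `x n` eventually fellow-travel
`γ` within a uniform bound (this is convergence in the cone topology for CAT(0) spaces,
and Gromov convergence for hyperbolic spaces). -/
def ConvergesToEnd (x : ℕ → X) (γ : ℝ → X) : Prop :=
  Tendsto (fun n => dist (γ 0) (x n)) atTop atTop ∧
  ∃ C : ℝ, ∀ t : ℝ, 0 ≤ t → ∀ σ : ℕ → ℝ → X,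
    (∀ n, IsGeodesicSegment (σ n) 0 (dist (γ 0) (x n)) (γ 0) (x n)) →
    ∀ᶠ n in atTop, dist (σ n t) (γ t) ≤ C

/-- Geodesically convex subset. -/
def GeodesicallyConvex (Y : Set X) : Prop :=
  ∀ x ∈ Y, ∀ y ∈ Y, ∀ γ : ℝ → X, IsGeodesicSegment γ 0 (dist x y) x y →
    ∀ t ∈ Set.Icc (0:ℝ) (dist x y), γ t ∈ Y

/-- `Z` is an absorbing set for the boundary point of the ray `ρ` within `Y`. -/
def IsAbsorbing (Y Z : Set X) (ρ : ℝ → X) : Prop :=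
  ∃ r : ℝ → ℝ, Tendsto r atTop atTop ∧
    ∀ᶠ t in atTop, ∀ y ∈ Y, dist (ρ t) y ≤ r t → y ∈ Z

/-- The path (induced length) pseudo-distance inside a subset `T` of `X`. -/
noncomputable def pathDist (T : Set X) (x y : X) : ENNReal :=
  ⨅ (f : ℝ → X) (_ : ContinuousOn f (Set.Icc 0 1)) (_ : Set.MapsTo f (Set.Icc 0 1) T)
    (_ : f 0 = x) (_ : f 1 = y), eVariationOn f (Set.Icc 0 1)

end MetricDefs

section ActionDefs

variable {X : Type*} [MetricSpace X] {G : Type*} [Group G] [MulAction G X]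

/-- `G` acts on `X` by isometries. -/
def IsometricAction (G X : Type*) [Group G] [MetricSpace X] [MulAction G X] : Prop :=
  ∀ g : G, Isometry fun x : X => g • x

/-- The action of `G` on `X` is (metrically) proper. -/
def ProperAction (G X : Type*) [Group G] [TopologicalSpace G] [MetricSpace X]
    [MulAction G X] : Prop :=
  ∀ (x : X) (r : ℝ), IsCompact {g : G | dist (g • x) x ≤ r}

/-- The action of `G` on `X` is locally discrete: around each point, some ball of
positive radius has open pointwise fixator. -/
def BoundedElt (X : Type*) [MetricSpace X] {G : Type*} [Group G] [MulAction G X]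
    (g : G) : Prop :=
  ∀ x : X, Bornology.IsBounded (Set.range fun n : ℤ => g ^ n • x)

/-- The ray `γ` represents the attracting point of `g`: all forward orbits of `g`
converge to the corresponding boundary point. -/
def AttractsTo (g : G) (γ : ℝ → X) : Prop :=
  IsGeodesicRay γ ∧ ∀ x : X, ConvergesToEnd (fun n => g ^ n • x) γ

/-- `γ` is a (labelled) axis of `g`: `g` translates along the geodesic line `γ`. -/
def IsAxialWith (g : G) (γ : ℝ → X) : Prop :=
  IsGeodesicLine γ ∧ ∃ k : ℝ, 0 < k ∧ ∀ t : ℝ, g • γ t = γ (t + k)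

/-- `g` is an axial isometry of `X`. -/
def IsAxial (X : Type*) [MetricSpace X] {G : Type*} [Group G] [MulAction G X]
    (g : G) : Prop :=
  ∃ γ : ℝ → X, IsAxialWith g γ

/-- `n ↦ gⁿ • x` is a quasi-isometric embedding of `ℤ` into `X`. -/
def QIHyperbolic (X : Type*) [MetricSpace X] {G : Type*} [Group G] [MulAction G X]
    (g : G) : Prop :=
  ∃ (x : X) (a b : ℝ), 0 < a ∧ 0 ≤ b ∧ ∀ m n : ℤ,
    a⁻¹ * |(m : ℝ) - (n : ℝ)| - b ≤ dist (g ^ m • x) (g ^ n • x) ∧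
    dist (g ^ m • x) (g ^ n • x) ≤ a * |(m : ℝ) - (n : ℝ)| + b

/-- `g` acts as a hyperbolic isometry of the NPC space `X`: axial in the complete CAT(0)
case, QI-hyperbolic in the proper Gromov-hyperbolic case. -/
def IsHyperbolicIsom (X : Type*) [MetricSpace X] {G : Type*} [Group G] [MulAction G X]
    (g : G) : Prop :=
  (CompleteSpace X ∧ CAT0 X ∧ IsAxial X g) ∨
  (ProperSpace X ∧ (∃ δ : ℝ, GromovHyperbolic X δ) ∧ QIHyperbolic X g)

/-- Translation length of `g` on `X` (the limit of `d(x, gⁿx)/n`, realized as an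
infimum by subadditivity). -/
noncomputable def translationLength (X : Type*) [MetricSpace X] {G : Type*} [Group G]
    [MulAction G X] (g : G) : ℝ :=
  sInf {r : ℝ | ∃ (x : X) (n : ℕ), 0 < n ∧ r = dist x (g ^ n • x) / n}

/-- The stabilizer in `G` of the boundary point represented by the ray `γ`. -/
def endStabilizer (hiso : IsometricAction G X) (γ : ℝ → X) : Subgroup G where
  carrier := {g : G | AsympRays (fun t => g • γ t) γ}
  one_mem' := ⟨0, fun t _ => by simp⟩
  mul_mem' := by
    rintro a b ⟨Ca, hCa⟩ ⟨Cb, hCb⟩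
    refine ⟨Cb + Ca, fun t ht => ?_⟩
    have h1 : dist ((a * b) • γ t) (a • γ t) = dist (b • γ t) (γ t) := by
      rw [mul_smul]
      exact (hiso a).dist_eq _ _
    calc dist ((a * b) • γ t) (γ t)
        ≤ dist ((a * b) • γ t) (a • γ t) + dist (a • γ t) (γ t) := dist_triangle _ _ _
      _ ≤ Cb + Ca := add_le_add (h1 ▸ hCb t ht) (hCa t ht)
  inv_mem' := by
    rintro a ⟨Ca, hCa⟩
    refine ⟨Ca, fun t ht => ?_⟩
    have h1 : dist (a⁻¹ • γ t) (γ t) = dist (γ t) (a • γ t) := by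
      have := (hiso a).dist_eq (a⁻¹ • γ t) (γ t)
      simp only [smul_inv_smul] at this
      exact this.symm
    rw [h1, dist_comm]
    exact hCa t ht

/-- The setwise stabilizer of `Y ⊆ X` in `G`. -/
def setStabilizer (G : Type*) {X : Type*} [Group G] [MulAction G X] (Y : Set X) :
    Subgroup G where
  carrier := {g : G | ∀ y : X, y ∈ Y ↔ g • y ∈ Y}
  one_mem' := fun y => by simp
  mul_mem' := by
    intro a b ha hb y
    rw [mul_smul]
    exact (hb y).trans (ha (b • y))
  inv_mem' := by
    intro a ha y
    have := ha (a⁻¹ • y)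
    rw [smul_inv_smul] at this
    exact this.symm

/-- The pointwise fixator of `Y ⊆ X` in `G`. -/
def fixator (G : Type*) {X : Type*} [Group G] [MulAction G X] (Y : Set X) :
    Subgroup G where
  carrier := {g : G | ∀ y ∈ Y, g • y = y}
  one_mem' := fun y _ => one_smul _ y
  mul_mem' := by
    intro a b ha hb y hy
    rw [mul_smul, hb y hy, ha y hy]
  inv_mem' := by
    intro a ha y hy
    conv_lhs => rw [← ha y hy]
    rw [inv_smul_smul]

/-- The set of common fixed points in `X` of a set of group elements. -/
def fixedSet (X : Type*) {G : Type*} [Group G] [MulAction G X] (S : Set G) : Set X :=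
  {x : X | ∀ g ∈ S, g • x = x}

/-- The action is locally discrete: around each point there is a ball of positive
radius whose fixator is open. -/
def LocallyDiscreteAction (G X : Type*) [Group G] [TopologicalSpace G] [MetricSpace X]
    [MulAction G X] : Prop :=
  ∀ x : X, ∃ r : ℝ, 0 < r ∧ IsOpen ((fixator G (Metric.closedBall x r) : Set G))

end ActionDefs

section GroupDefs

variable {G : Type*} [Group G]

/-- The parabolic set of `g`: elements with relatively compact forward `g`-conjugation
orbit. -/
def parSet [TopologicalSpace G] (g : G) : Set G :=
  {x : G | IsCompact (closure (Set.range fun n : ℕ => g ^ n * x * (g ^ n)⁻¹))}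

/-- The contraction set of `g` modulo the subgroup `K`: elements whose forward
`g`-conjugation orbit converges to the trivial coset in `G ⧸ K`. -/
def conSet [TopologicalSpace G] (g : G) (K : Subgroup G) : Set G :=
  {x : G | Tendsto (fun n : ℕ => ((g ^ n * x * (g ^ n)⁻¹ : G) : G ⧸ K)) atTop
    (𝓝 ((1 : G) : G ⧸ K))}

/-- A compact open subgroup. -/
def CompactOpen [TopologicalSpace G] (U : Subgroup G) : Prop :=
  IsCompact (U : Set G) ∧ IsOpen (U : Set G)

/-- The displacement index `|gUg⁻¹ : U ∩ gUg⁻¹|`. -/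
noncomputable def scaleIndex (g : G) (U : Subgroup G) : ℕ :=
  U.relIndex (U.map (MulAut.conj g).toMonoidHom)

/-- The scale of `g`: minimum of `|gUg⁻¹ : U ∩ gUg⁻¹|` over compact open subgroups. -/
noncomputable def scale [TopologicalSpace G] (g : G) : ℕ :=
  sInf {n : ℕ | ∃ U : Subgroup G, CompactOpen U ∧ scaleIndex g U = n}

/-- `U` is a minimizing (tidy) compact open subgroup for `g`. -/
def IsMinimizing [TopologicalSpace G] (g : G) (U : Subgroup G) : Prop :=
  CompactOpen U ∧ scaleIndex g U = scale g

/-- For a t.d.l.c. group, the modular function satisfies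
`Δ(g) = |gUg⁻¹ : U ∩ gUg⁻¹| / |U : U ∩ gUg⁻¹|` for every compact open subgroup `U`.
`ModularEq g s` says that `Δ(g) = s`. -/
def ModularEq [TopologicalSpace G] (g : G) (s : ℕ) : Prop :=
  ∀ U : Subgroup G, CompactOpen U → scaleIndex g U = s * scaleIndex g⁻¹ U

/-- `U₊ = ⋂_{n ≥ 0} gⁿ U g⁻ⁿ`. -/
def Uplus (g : G) (U : Subgroup G) : Subgroup G :=
  ⨅ n : ℕ, U.map (MulAut.conj (g ^ n)).toMonoidHom

/-- `U₋ = ⋂_{n ≤ 0} gⁿ U g⁻ⁿ`. -/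
def Uminus (g : G) (U : Subgroup G) : Subgroup G :=
  ⨅ n : ℕ, U.map (MulAut.conj ((g ^ n)⁻¹)).toMonoidHom

/-- `U` is tidy for `g` (conditions TA and TB of Willis). -/
def TidyFor [TopologicalSpace G] (g : G) (U : Subgroup G) : Prop :=
  CompactOpen U ∧
  (U : Set G) = (Uplus g U : Set G) * (Uminus g U : Set G) ∧
  IsClosed (⋃ n : ℕ, (fun h : G => g ^ n * h * (g ^ n)⁻¹) '' (Uplus g U : Set G))

/-- The nub of `g`: intersection of all minimizing (tidy) subgroups for `g`. -/
noncomputable def nub [TopologicalSpace G] (g : G) : Subgroup G :=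
  ⨅ (U : Subgroup G) (_ : IsMinimizing g U), U

/-- The scale of an automorphism `α`: minimum of `|α(U) : α(U) ∩ U|` over compact open
subgroups. -/
noncomputable def scaleAut [TopologicalSpace G] (α : G ≃* G) : ℕ :=
  sInf {n : ℕ | ∃ U : Subgroup G, CompactOpen U ∧ U.relIndex (U.map α.toMonoidHom) = n}

end GroupDefs

section TreeDefs

variable {X : Type*} [MetricSpace X]

/-- `x ≤_T y`: some geodesic ray from `x` to the end of `ρ` contained in `T` passes
through `y`. -/
def leTree (T : Set X) (ρ : ℝ → X) (x y : X) : Prop :=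
  ∃ γ : ℝ → X, IsGeodesicRay γ ∧ γ 0 = x ∧ AsympRays γ ρ ∧ γ '' Set.Ici (0:ℝ) ⊆ T ∧
    ∃ t : ℝ, 0 ≤ t ∧ γ t = y

/-- The branching function of the tree `T` (with distinguished end given by `ρ`)
based at `x₀`. -/
noncomputable def branching (T : Set X) (ρ : ℝ → X) (x₀ : X) (m : ℝ) : ℕ :=
  if 0 < m then
    Nat.card {y : X | leTree T ρ y x₀ ∧ pathDist T x₀ y = ENNReal.ofReal m}
  else 1

end TreeDefs
section Aux

variable {X : Type*} [MetricSpace X]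

lemma seg_dist {γ : ℝ → X} {L : ℝ} (h : IsGeodesicOn γ (Set.Icc 0 L)) (hL : 0 ≤ L)
    {u v : ℝ} (hu0 : 0 ≤ u) (huL : u ≤ L) (hv0 : 0 ≤ v) (hvL : v ≤ L) :
    dist (γ u) (γ v) = |u - v| :=
  h u ⟨hu0, huL⟩ v ⟨hv0, hvL⟩

lemma seg_reverse {γ : ℝ → X} {x y : X} (h : IsGeodesicSegment γ 0 (dist x y) x y) :
    IsGeodesicSegment (fun s => γ (dist x y - s)) 0 (dist y x) y x := by
  obtain ⟨hd, h0, h1, hgeo⟩ := h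
  refine ⟨dist_nonneg, by simpa using h1, by rw [dist_comm]; simpa using h0, ?_⟩
  intro u hu v hv
  rw [dist_comm y x] at hu hv
  have hu' : dist x y - u ∈ Set.Icc (0:ℝ) (dist x y) := ⟨by linarith [hu.2], by linarith [hu.1]⟩
  have hv' : dist x y - v ∈ Set.Icc (0:ℝ) (dist x y) := ⟨by linarith [hv.2], by linarith [hv.1]⟩
  rw [hgeo _ hu' _ hv']
  rw [abs_sub_comm]
  congr 1
  ring

/-- a point on a geodesic from x to far point, subsegment within image. -/
lemma subseg {Γ : ℝ → X} {T : ℝ} (hΓ : IsGeodesicOn Γ (Set.Icc 0 T))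
    {u₁ u₂ : ℝ} (h1 : u₁ ∈ Set.Icc 0 T) (h2 : u₂ ∈ Set.Icc 0 T) :
    ∃ ν : ℝ → X, IsGeodesicSegment ν 0 (dist (Γ u₁) (Γ u₂)) (Γ u₁) (Γ u₂) ∧
      ν '' Set.Icc (0:ℝ) (dist (Γ u₁) (Γ u₂)) ⊆ Γ '' Set.Icc 0 T := by
  have hd : dist (Γ u₁) (Γ u₂) = |u₁ - u₂| := hΓ _ h1 _ h2
  rcases le_total u₁ u₂ with hle | hle
  · refine ⟨fun s => Γ (u₁ + s), ⟨dist_nonneg, by simp, ?_, ?_⟩, ?_⟩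
    · rw [hd, abs_of_nonpos (by linarith)]; congr 1; ring
    · intro u hu v hv
      rw [hd, abs_of_nonpos (by linarith)] at hu hv
      have hu' : u₁ + u ∈ Set.Icc 0 T := ⟨by linarith [hu.1, h1.1], by linarith [hu.2, h2.2]⟩
      have hv' : u₁ + v ∈ Set.Icc 0 T := ⟨by linarith [hv.1, h1.1], by linarith [hv.2, h2.2]⟩
      rw [hΓ _ hu' _ hv']; congr 1; ring
    · rintro p ⟨s, hs, rfl⟩
      rw [hd, abs_of_nonpos (by linarith)] at hs
      exact ⟨u₁ + s, ⟨by linarith [hs.1, h1.1], by linarith [hs.2, h2.2]⟩, rfl⟩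
  · refine ⟨fun s => Γ (u₁ - s), ⟨dist_nonneg, by simp, ?_, ?_⟩, ?_⟩
    · rw [hd, abs_of_nonneg (by linarith)]; congr 1; ring
    · intro u hu v hv
      rw [hd, abs_of_nonneg (by linarith)] at hu hv
      have hu' : u₁ - u ∈ Set.Icc 0 T := ⟨by linarith [hu.2, h2.1], by linarith [hu.1, h1.2]⟩
      have hv' : u₁ - v ∈ Set.Icc 0 T := ⟨by linarith [hv.2, h2.1], by linarith [hv.1, h1.2]⟩
      rw [hΓ _ hu' _ hv', abs_sub_comm]; congr 1; ring
    · rintro p ⟨s, hs, rfl⟩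
      rw [hd, abs_of_nonneg (by linarith)] at hs
      exact ⟨u₁ - s, ⟨by linarith [hs.2, h2.1], by linarith [hs.1, h1.2]⟩, rfl⟩

/-- CAT(0) midpoint comparison: midpoints from a common apex. -/
lemma cat0_midpt (hC : CAT0 X) {x y z m₁ m₂ : X}
    (h1 : dist x m₁ = dist x y / 2) (h1' : dist y m₁ = dist x y / 2)
    (h2 : dist x m₂ = dist x z / 2) (h2' : dist z m₂ = dist x z / 2) :
    dist m₁ m₂ ≤ dist y z / 2 := by
  have cn := hC.2
  have s1 : dist z m₁ ^ 2 ≤ (dist z x ^ 2 + dist z y ^ 2) / 2 - dist x y ^ 2 / 4 := by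
    refine cn z x y m₁ (by rwa [dist_comm] at h1 ⊢) (by rwa [dist_comm] at h1' ⊢)
  have s2 : dist m₁ m₂ ^ 2 ≤ (dist m₁ x ^ 2 + dist m₁ z ^ 2) / 2 - dist x z ^ 2 / 4 := by
    refine cn m₁ x z m₂ (by rwa [dist_comm] at h2 ⊢) (by rwa [dist_comm] at h2' ⊢)
  have hmx : dist m₁ x = dist x y / 2 := by rw [dist_comm]; exact h1
  have hm1z : dist m₁ z = dist z m₁ := dist_comm _ _
  have key : dist m₁ m₂ ^ 2 ≤ (dist z y / 2) ^ 2 := by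
    rw [hmx, hm1z] at s2
    rw [dist_comm z x] at s1
    linarith
  have h0 : (0:ℝ) ≤ dist z y / 2 := by positivity
  calc dist m₁ m₂ = Real.sqrt (dist m₁ m₂ ^ 2) := (Real.sqrt_sq dist_nonneg).symm
    _ ≤ Real.sqrt ((dist z y / 2) ^ 2) := Real.sqrt_le_sqrt key
    _ = dist z y / 2 := Real.sqrt_sq h0
    _ = dist y z / 2 := by rw [dist_comm]

end Aux
section Aux2

variable {X : Type*} [MetricSpace X]

lemma prop_dist {σ : ℝ → X} {L : ℝ} (hL : 0 ≤ L) (hσ : IsGeodesicOn σ (Set.Icc 0 L))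
    {u v : ℝ} (hu : u ∈ Set.Icc (0:ℝ) 1) (hv : v ∈ Set.Icc (0:ℝ) 1) :
    dist (σ (u * L)) (σ (v * L)) = |u - v| * L := by
  rw [hσ _ ⟨mul_nonneg hu.1 hL, by nlinarith [hu.2]⟩ _ ⟨mul_nonneg hv.1 hL, by nlinarith [hv.2]⟩,
    ← sub_mul, abs_mul, abs_of_nonneg hL]

lemma cat0_fellow (hC : CAT0 X) {L L' D : ℝ} (hD : 0 ≤ D) {σ τ : ℝ → X}
    (hL : 0 ≤ L) (hL' : 0 ≤ L')
    (hσ : IsGeodesicOn σ (Set.Icc 0 L)) (hτ : IsGeodesicOn τ (Set.Icc 0 L'))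
    (hd0 : dist (σ 0) (τ 0) ≤ D) (hd1 : dist (σ L) (τ L') ≤ D) :
    ∀ t, 0 ≤ t → t ≤ L → t ≤ L' → dist (σ t) (τ t) ≤ 3 * D := by
  set f : ℝ → ℝ := fun u => dist (σ (u * L)) (τ (u * L')) with hf
  have hmid : ∀ u v : ℝ, u ∈ Set.Icc (0:ℝ) 1 → v ∈ Set.Icc (0:ℝ) 1 →
      f ((u + v) / 2) ≤ (f u + f v) / 2 := by
    intro u v hu hv
    set m : ℝ := (u + v) / 2 with hm
    have hmI : m ∈ Set.Icc (0:ℝ) 1 := ⟨by have := hu.1; have := hv.1; positivity,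
      by rw [hm]; linarith [hu.2, hv.2]⟩
    have hum : |u - m| = |u - v| / 2 := by
      rw [hm, show u - (u + v)/2 = (u - v)/2 by ring, abs_div]; norm_num
    have hvm : |v - m| = |u - v| / 2 := by
      rw [hm, show v - (u + v)/2 = -((u - v)/2) by ring, abs_neg, abs_div]; norm_num
    obtain ⟨ζ, hζd, hζ0, hζ1, hζg⟩ := hC.1 (σ (u * L)) (τ (v * L'))
    set d : ℝ := dist (σ (u * L)) (τ (v * L')) with hdd
    have hdnn : 0 ≤ d := dist_nonneg
    have hd2 : d / 2 ∈ Set.Icc (0:ℝ) d := ⟨by positivity, by linarith⟩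
    set m' : X := ζ (d / 2) with hm'
    have hAm' : dist (σ (u * L)) m' = d / 2 := by
      rw [hm', ← hζ0, hζg 0 ⟨le_refl 0, hdnn⟩ (d/2) hd2,
        abs_of_nonpos (by linarith [hd2.1])]
      ring
    have hBm' : dist (τ (v * L')) m' = d / 2 := by
      rw [hm', ← hζ1, hζg d ⟨hdnn, le_refl d⟩ (d/2) hd2,
        abs_of_nonneg (by linarith [hd2.1])]
      ring
    have hA2 : dist (σ (u * L)) m' = dist (σ (u * L)) (τ (v * L')) / 2 := by
      rw [← hdd]; exact hAm'
    have hB2 : dist (τ (v * L')) m' = dist (σ (u * L)) (τ (v * L')) / 2 := by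
      rw [← hdd]; exact hBm'
    have e11 : dist (σ (u * L)) (σ (m * L)) = dist (σ (u * L)) (σ (v * L)) / 2 := by
      rw [prop_dist hL hσ hu hmI, prop_dist hL hσ hu hv, hum]; ring
    have e12 : dist (σ (v * L)) (σ (m * L)) = dist (σ (u * L)) (σ (v * L)) / 2 := by
      rw [prop_dist hL hσ hv hmI, prop_dist hL hσ hu hv, hvm]; ring
    have c1 : dist (σ (m * L)) m' ≤ dist (σ (v * L)) (τ (v * L')) / 2 :=
      cat0_midpt hC e11 e12 hA2 hB2
    have f1 : dist (τ (v * L')) m' = dist (τ (v * L')) (σ (u * L)) / 2 := by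
      rw [hBm', dist_comm (τ (v * L')) (σ (u * L)), ← hdd]
    have f2 : dist (σ (u * L)) m' = dist (τ (v * L')) (σ (u * L)) / 2 := by
      rw [hAm', dist_comm (τ (v * L')) (σ (u * L)), ← hdd]
    have f3 : dist (τ (v * L')) (τ (m * L')) = dist (τ (v * L')) (τ (u * L')) / 2 := by
      rw [prop_dist hL' hτ hv hmI, prop_dist hL' hτ hv hu, hvm, abs_sub_comm v u]; ring
    have f4 : dist (τ (u * L')) (τ (m * L')) = dist (τ (v * L')) (τ (u * L')) / 2 := by
      rw [prop_dist hL' hτ hu hmI, prop_dist hL' hτ hv hu, hum, abs_sub_comm v u]; ring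
    have c2 : dist m' (τ (m * L')) ≤ dist (σ (u * L)) (τ (u * L')) / 2 :=
      cat0_midpt hC f1 f2 f3 f4
    calc f m ≤ dist (σ (m * L)) m' + dist m' (τ (m * L')) := dist_triangle _ _ _
      _ ≤ dist (σ (v * L)) (τ (v * L')) / 2 + dist (σ (u * L)) (τ (u * L')) / 2 :=
          add_le_add c1 c2
      _ = (f u + f v) / 2 := by rw [hf]; ring
  -- endpoints
  have hf0 : f 0 ≤ D := by simpa [hf] using hd0
  have hf1 : f 1 ≤ D := by simpa [hf] using hd1
  -- dyadic bound
  have hdy : ∀ n : ℕ, ∀ j : ℕ, j ≤ 2 ^ n → f ((j : ℝ) / 2 ^ n) ≤ D := by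
    intro n
    induction n with
    | zero =>
      intro j hj
      interval_cases j
      · simpa using hf0
      · simpa using hf1
    | succ n ih =>
      intro j hj
      rcases Nat.even_or_odd j with ⟨k, hk⟩ | ⟨k, hk⟩
      · have hk2 : k ≤ 2 ^ n := by omega
        have : (j : ℝ) / 2 ^ (n + 1) = (k : ℝ) / 2 ^ n := by
          subst hk; push_cast; ring
        rw [this]; exact ih k hk2
      · have hk2 : k + 1 ≤ 2 ^ n := by omega
        have hk1 : k ≤ 2 ^ n := by omega
        have hky : ((k:ℝ) / 2 ^ n) ∈ Set.Icc (0:ℝ) 1 := by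
          constructor
          · positivity
          · rw [div_le_one (by positivity)]
            exact_mod_cast hk1
        have hky' : (((k:ℕ) + 1 : ℝ) / 2 ^ n) ∈ Set.Icc (0:ℝ) 1 := by
          constructor
          · positivity
          · rw [div_le_one (by positivity)]
            exact_mod_cast hk2
        have heq : (j : ℝ) / 2 ^ (n + 1) = ((k : ℝ) / 2 ^ n + ((k:ℕ) + 1 : ℝ) / 2 ^ n) / 2 := by
          subst hk; push_cast; field_simp; ring
        rw [heq]
        calc f (((k:ℝ) / 2 ^ n + ((k:ℕ) + 1 : ℝ) / 2 ^ n) / 2)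
            ≤ (f ((k:ℝ) / 2 ^ n) + f (((k:ℕ) + 1 : ℝ) / 2 ^ n)) / 2 := hmid _ _ hky hky'
          _ ≤ (D + D) / 2 := by
              have h1 := ih k hk1
              have h2 := ih (k + 1) hk2
              push_cast at h2 ⊢
              linarith
          _ = D := by ring
  -- difference of lengths
  have hLL' : |L - L'| ≤ 2 * D := by
    have e1 : dist (σ 0) (σ L) = L := by
      rw [hσ 0 ⟨le_refl 0, hL⟩ L ⟨hL, le_refl L⟩, abs_of_nonpos (by linarith), neg_sub, sub_zero]
    have e2 : dist (τ 0) (τ L') = L' := by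
      rw [hτ 0 ⟨le_refl 0, hL'⟩ L' ⟨hL', le_refl L'⟩, abs_of_nonpos (by linarith), neg_sub,
        sub_zero]
    have t1 : L ≤ D + L' + D := by
      calc L = dist (σ 0) (σ L) := e1.symm
        _ ≤ dist (σ 0) (τ 0) + dist (τ 0) (τ L') + dist (τ L') (σ L) :=
            dist_triangle4 _ _ _ _
        _ ≤ D + L' + D := by
            rw [e2, dist_comm (τ L') (σ L)]
            exact add_le_add (add_le_add hd0 (le_refl _)) hd1
    have t2 : L' ≤ D + L + D := by
      calc L' = dist (τ 0) (τ L') := e2.symm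
        _ ≤ dist (τ 0) (σ 0) + dist (σ 0) (σ L) + dist (σ L) (τ L') :=
            dist_triangle4 _ _ _ _
        _ ≤ D + L + D := by
            rw [e1, dist_comm (τ 0) (σ 0)]
            exact add_le_add (add_le_add hd0 (le_refl _)) hd1
    rw [abs_le]; constructor <;> linarith
  -- main bound at a given t
  intro t ht0 htL htL'
  rcases eq_or_lt_of_le hL with hL0 | hL0
  · have ht : t = 0 := le_antisymm (htL.trans hL0.symm.le) ht0
    subst ht
    calc dist (σ 0) (τ 0) ≤ D := hd0
      _ ≤ 3 * D := by linarith
  have hu : t / L ∈ Set.Icc (0:ℝ) 1 := ⟨by positivity, by rw [div_le_one hL0]; exact htL⟩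
  have happrox : ∀ n : ℕ, dist (σ t) (τ t) ≤ 3 * D + (L + L') * (1 / 2) ^ n := by
    intro n
    set u : ℝ := t / L with hud
    set j : ℕ := ⌊u * 2 ^ n⌋₊ with hjd
    have hj2 : j ≤ 2 ^ n := by
      have : u * 2 ^ n ≤ 2 ^ n := by nlinarith [hu.2, pow_pos (show (0:ℝ) < 2 by norm_num) n]
      calc j ≤ ⌊(2:ℝ) ^ n⌋₊ := Nat.floor_le_floor (by exact this)
        _ = 2 ^ n := by
            rw [show ((2:ℝ) ^ n) = ((2 ^ n : ℕ) : ℝ) by push_cast; ring, Nat.floor_natCast]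
    set un : ℝ := (j : ℝ) / 2 ^ n with hund
    have hun : un ∈ Set.Icc (0:ℝ) 1 := ⟨by positivity, by
      rw [hund, div_le_one (by positivity)]; exact_mod_cast hj2⟩
    have h2n : (0:ℝ) < 2 ^ n := by positivity
    have hfl : (j : ℝ) ≤ u * 2 ^ n := Nat.floor_le (by positivity)
    have hfu : u * 2 ^ n < (j : ℝ) + 1 := Nat.lt_floor_add_one _
    have hpow : ((1:ℝ) / 2) ^ n = 1 / 2 ^ n := by rw [div_pow, one_pow]
    have hle1 : un ≤ u := by rw [hund, div_le_iff₀ h2n]; exact hfl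
    have hle2 : u - un ≤ (1 / 2) ^ n := by
      have hx : u ≤ ((j:ℝ) + 1) / 2 ^ n := by rw [le_div_iff₀ h2n]; exact hfu.le
      have hy : ((j:ℝ) + 1) / 2 ^ n = un + 1 / 2 ^ n := by rw [hund]; ring
      rw [hpow]; linarith
    have habs : |u - un| ≤ (1 / 2) ^ n := by
      rw [abs_le]
      have hp : (0:ℝ) ≤ (1/2)^n := by positivity
      constructor <;> linarith
    have ht' : t = u * L := by rw [hud]; field_simp
    have hmemt : t ∈ Set.Icc (0:ℝ) L' := ⟨ht0, htL'⟩
    have hmemun : un * L' ∈ Set.Icc (0:ℝ) L' :=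
      ⟨mul_nonneg hun.1 hL', by nlinarith [hun.2]⟩
    have term1 : dist (σ t) (σ (un * L)) ≤ (1 / 2) ^ n * L := by
      rw [ht', prop_dist hL hσ hu hun]
      exact mul_le_mul_of_nonneg_right habs hL
    have term2 : dist (σ (un * L)) (τ (un * L')) ≤ D := hdy n j hj2
    have term3 : dist (τ (un * L')) (τ t) ≤ (1 / 2) ^ n * L' + 2 * D := by
      rw [hτ _ hmemun _ hmemt]
      have he : un * L' - t = (un - u) * L' + u * (L' - L) := by rw [ht']; ring
      rw [he]
      calc |(un - u) * L' + u * (L' - L)| ≤ |(un - u) * L'| + |u * (L' - L)| := abs_add_le _ _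
        _ = |un - u| * L' + u * |L' - L| := by
            rw [abs_mul, abs_mul, abs_of_nonneg hL', abs_of_nonneg hu.1]
        _ ≤ (1 / 2) ^ n * L' + 1 * (2 * D) := by
            refine add_le_add (mul_le_mul_of_nonneg_right ?_ hL') ?_
            · rw [abs_sub_comm]; exact habs
            · refine mul_le_mul hu.2 ?_ (abs_nonneg _) zero_le_one
              rw [abs_sub_comm]; exact hLL'
        _ = (1 / 2) ^ n * L' + 2 * D := by ring
    calc dist (σ t) (τ t) ≤ dist (σ t) (σ (un * L)) + dist (σ (un * L)) (τ (un * L'))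
          + dist (τ (un * L')) (τ t) := dist_triangle4 _ _ _ _
      _ ≤ (1 / 2) ^ n * L + D + ((1 / 2) ^ n * L' + 2 * D) :=
          add_le_add (add_le_add term1 term2) term3
      _ = 3 * D + (L + L') * (1 / 2) ^ n := by ring
  have hT : Filter.Tendsto (fun n : ℕ => 3 * D + (L + L') * (1 / 2) ^ n) Filter.atTop
      (nhds (3 * D + (L + L') * 0)) := by
    exact Filter.Tendsto.const_add _ (Filter.Tendsto.const_mul _
      (tendsto_pow_atTop_nhds_zero_of_lt_one (by norm_num) (by norm_num)))
  have := ge_of_tendsto' hT happrox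
  simpa using this

end Aux2
section Aux3

variable {X : Type*} [MetricSpace X]

lemma len_diff {L L' D : ℝ} {σ τ : ℝ → X} (hL : 0 ≤ L) (hL' : 0 ≤ L')
    (hσ : IsGeodesicOn σ (Set.Icc 0 L)) (hτ : IsGeodesicOn τ (Set.Icc 0 L'))
    (hd0 : dist (σ 0) (τ 0) ≤ D) (hd1 : dist (σ L) (τ L') ≤ D) :
    |L - L'| ≤ 2 * D := by
  have e1 : dist (σ 0) (σ L) = L := by
    rw [hσ 0 ⟨le_refl 0, hL⟩ L ⟨hL, le_refl L⟩, abs_of_nonpos (by linarith), neg_sub, sub_zero]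
  have e2 : dist (τ 0) (τ L') = L' := by
    rw [hτ 0 ⟨le_refl 0, hL'⟩ L' ⟨hL', le_refl L'⟩, abs_of_nonpos (by linarith), neg_sub,
      sub_zero]
  have t1 : L ≤ D + L' + D := by
    calc L = dist (σ 0) (σ L) := e1.symm
      _ ≤ dist (σ 0) (τ 0) + dist (τ 0) (τ L') + dist (τ L') (σ L) := dist_triangle4 _ _ _ _
      _ ≤ D + L' + D := by
          rw [e2, dist_comm (τ L') (σ L)]
          exact add_le_add (add_le_add hd0 (le_refl _)) hd1
  have t2 : L' ≤ D + L + D := by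
    calc L' = dist (τ 0) (τ L') := e2.symm
      _ ≤ dist (τ 0) (σ 0) + dist (σ 0) (σ L) + dist (σ L) (τ L') := dist_triangle4 _ _ _ _
      _ ≤ D + L + D := by
          rw [e1, dist_comm (τ 0) (σ 0)]
          exact add_le_add (add_le_add hd0 (le_refl _)) hd1
  rw [abs_le]; constructor <;> linarith

lemma seg_self_dist {L : ℝ} {σ : ℝ → X} (hL : 0 ≤ L) (hσ : IsGeodesicOn σ (Set.Icc 0 L))
    {u v : ℝ} (h0 : 0 ≤ u) (h1 : u ≤ v) (h2 : v ≤ L) : dist (σ u) (σ v) = v - u := by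
  rw [hσ u ⟨h0, by linarith⟩ v ⟨by linarith, h2⟩, abs_of_nonpos (by linarith), neg_sub]

lemma slim_fellow {δ : ℝ} (hGeo : GeodesicSpace X) (hδ : 0 ≤ δ) (hslim : SlimTriangles X δ)
    {L L' D : ℝ} (hD : 0 ≤ D) {σ τ : ℝ → X} (hL : 0 ≤ L) (hL' : 0 ≤ L')
    (hσ : IsGeodesicOn σ (Set.Icc 0 L)) (hτ : IsGeodesicOn τ (Set.Icc 0 L'))
    (hd0 : dist (σ 0) (τ 0) ≤ D) (hd1 : dist (σ L) (τ L') ≤ D) :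
    ∀ t, 0 ≤ t → t ≤ L → t ≤ L' → dist (σ t) (τ t) ≤ 4 * δ + 5 * D := by
  have eσ : dist (σ 0) (σ L) = L := by rw [seg_self_dist hL hσ (le_refl 0) hL (le_refl L), sub_zero]
  have eτ : dist (τ 0) (τ L') = L' := by rw [seg_self_dist hL' hτ (le_refl 0) hL' (le_refl L'), sub_zero]
  have hLL' : |L - L'| ≤ 2 * D := len_diff hL hL' hσ hτ hd0 hd1
  intro t ht0 htL htL'
  have segσ : IsGeodesicSegment σ 0 (dist (σ 0) (σ L)) (σ 0) (σ L) :=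
    ⟨dist_nonneg, rfl, by rw [eσ], by rw [eσ]; exact hσ⟩
  obtain ⟨γ₂, hγ₂⟩ := hGeo (σ L) (τ L')
  obtain ⟨γ₃, hγ₃⟩ := hGeo (τ L') (σ 0)
  have hts : t ∈ Set.Icc (0:ℝ) (dist (σ 0) (σ L)) := by rw [eσ]; exact ⟨ht0, htL⟩
  obtain ⟨p, hp, hdp⟩ := hslim (σ 0) (σ L) (τ L') σ γ₂ γ₃ segσ hγ₂ hγ₃ t hts
  have hst : dist (σ 0) (σ t) = t := by
    rw [seg_self_dist hL hσ (le_refl 0) ht0 htL, sub_zero]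
  have hsLt : dist (σ t) (σ L) = L - t := seg_self_dist hL hσ ht0 htL (le_refl L)
  have htt : dist (τ 0) (τ t) = t := by
    rw [seg_self_dist hL' hτ (le_refl 0) ht0 htL', sub_zero]
  rcases hp with ⟨u, hu, rfl⟩ | ⟨u, hu, rfl⟩
  · -- p on side from σ L to τ L'
    have hpL : dist (γ₂ u) (σ L) ≤ D := by
      rw [← hγ₂.2.1, hγ₂.2.2.2 u hu 0 ⟨le_refl 0, dist_nonneg⟩, sub_zero,
        abs_of_nonneg hu.1]
      exact hu.2.trans hd1
    have h1 : L - t ≤ δ + D := by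
      rw [← hsLt]
      calc dist (σ t) (σ L) ≤ dist (σ t) (γ₂ u) + dist (γ₂ u) (σ L) := dist_triangle _ _ _
        _ ≤ δ + D := add_le_add hdp hpL
    have h2 : dist (τ L') (τ t) = L' - t := by
      rw [dist_comm]; exact seg_self_dist hL' hτ ht0 htL' (le_refl L')
    calc dist (σ t) (τ t) ≤ dist (σ t) (σ L) + dist (σ L) (τ L') + dist (τ L') (τ t) :=
          dist_triangle4 _ _ _ _
      _ = (L - t) + dist (σ L) (τ L') + (L' - t) := by rw [hsLt, h2]
      _ ≤ 4 * δ + 5 * D := by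
          have habs := abs_le.1 hLL'
          linarith [hd1]
  · -- p on side from τ L' to σ 0 ; second triangle
    obtain ⟨η, hη⟩ := hGeo (σ 0) (τ 0)
    have segτ : IsGeodesicSegment τ 0 (dist (τ 0) (τ L')) (τ 0) (τ L') :=
      ⟨dist_nonneg, rfl, by rw [eτ], by rw [eτ]; exact hτ⟩
    obtain ⟨q, hq, hdq⟩ := hslim (τ L') (σ 0) (τ 0) γ₃ η τ hγ₃ hη segτ u hu
    rcases hq with ⟨w, hw, rfl⟩ | ⟨s, hs, rfl⟩
    · -- q on side from σ 0 to τ 0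
      have hq0 : dist (η w) (σ 0) ≤ D := by
        rw [← hη.2.1, hη.2.2.2 w hw 0 ⟨le_refl 0, dist_nonneg⟩, sub_zero,
          abs_of_nonneg hw.1]
        exact hw.2.trans hd0
      have h1 : t ≤ 2 * δ + D := by
        rw [← hst, dist_comm (σ 0) (σ t)]
        calc dist (σ t) (σ 0) ≤ dist (σ t) (γ₃ u) + dist (γ₃ u) (η w) + dist (η w) (σ 0) :=
              dist_triangle4 _ _ _ _
          _ ≤ δ + δ + D := add_le_add (add_le_add hdp hdq) hq0
          _ = 2 * δ + D := by ring
      calc dist (σ t) (τ t) ≤ dist (σ t) (σ 0) + dist (σ 0) (τ 0) + dist (τ 0) (τ t) :=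
            dist_triangle4 _ _ _ _
        _ ≤ t + D + t := by
            rw [dist_comm (σ t) (σ 0), hst, htt]
            exact add_le_add (add_le_add (le_refl t) hd0) (le_refl t)
        _ ≤ 4 * δ + 5 * D := by linarith
    · -- q = τ s on side from τ 0 to τ L'
      rw [eτ] at hs
      have hkey : dist (σ t) (τ s) ≤ 2 * δ :=
        calc dist (σ t) (τ s) ≤ dist (σ t) (γ₃ u) + dist (γ₃ u) (τ s) := dist_triangle _ _ _
          _ ≤ δ + δ := add_le_add hdp hdq
          _ = 2 * δ := by ring
      have hts' : dist (τ 0) (τ s) = s := by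
        rw [seg_self_dist hL' hτ (le_refl 0) hs.1 hs.2, sub_zero]
      have hb1 : s ≤ D + t + 2 * δ := by
        rw [← hts']
        calc dist (τ 0) (τ s) ≤ dist (τ 0) (σ 0) + dist (σ 0) (σ t) + dist (σ t) (τ s) :=
              dist_triangle4 _ _ _ _
          _ ≤ D + t + 2 * δ := by
              rw [dist_comm (τ 0) (σ 0), hst]
              exact add_le_add (add_le_add hd0 (le_refl t)) hkey
      have hb2 : t ≤ D + s + 2 * δ := by
        rw [← hst]
        calc dist (σ 0) (σ t) ≤ dist (σ 0) (τ 0) + dist (τ 0) (τ s) + dist (τ s) (σ t) :=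
              dist_triangle4 _ _ _ _
          _ ≤ D + s + 2 * δ := by
              rw [hts', dist_comm (τ s) (σ t)]
              exact add_le_add (add_le_add hd0 (le_refl s)) hkey
      have hτst : dist (τ s) (τ t) = |s - t| := hτ s ⟨hs.1, hs.2⟩ t ⟨ht0, htL'⟩
      have habs : |s - t| ≤ D + 2 * δ := by rw [abs_le]; constructor <;> linarith
      calc dist (σ t) (τ t) ≤ dist (σ t) (τ s) + dist (τ s) (τ t) := dist_triangle _ _ _
        _ ≤ 2 * δ + (D + 2 * δ) := by rw [hτst]; exact add_le_add hkey habs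
        _ ≤ 4 * δ + 5 * D := by linarith

lemma npc_fellow (hNPC : NPCSpace X) {D : ℝ} (hD : 0 ≤ D) :
    ∃ K, 0 ≤ K ∧ ∀ (L L' : ℝ) (σ τ : ℝ → X), 0 ≤ L → 0 ≤ L' →
      IsGeodesicOn σ (Set.Icc 0 L) → IsGeodesicOn τ (Set.Icc 0 L') →
      dist (σ 0) (τ 0) ≤ D → dist (σ L) (τ L') ≤ D →
      ∀ t, 0 ≤ t → t ≤ L → t ≤ L' → dist (σ t) (τ t) ≤ K := by
  rcases hNPC.2 with ⟨_, hC⟩ | ⟨_, δ, hδ0, hslim⟩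
  · exact ⟨3 * D, by positivity,
      fun L L' σ τ hL hL' hσ hτ h0 h1 => cat0_fellow hC hD hL hL' hσ hτ h0 h1⟩
  · exact ⟨4 * δ + 5 * D, by positivity,
      fun L L' σ τ hL hL' hσ hτ h0 h1 => slim_fellow hNPC.1 hδ0 hslim hD hL hL' hσ hτ h0 h1⟩

end Aux3
section Aux4

variable {X : Type*} [MetricSpace X] {G : Type*} [Group G] [TopologicalSpace G]
  [MulAction G X] [ContinuousSMul G X]

lemma smul_isom (hiso : IsometricAction G X) (a : G) (x y : X) :
    dist (a • x) (a • y) = dist x y := (hiso a).dist_eq x y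

lemma par_bounded_displacement {g x : G} (hx : x ∈ parSet g⁻¹) (p : X) :
    ∃ C₀, 0 ≤ C₀ ∧ ∀ n : ℕ, dist (((g ^ n)⁻¹ * x * g ^ n) • p) p ≤ C₀ := by
  have hx' : IsCompact (closure (Set.range fun n : ℕ => (g⁻¹) ^ n * x * ((g⁻¹) ^ n)⁻¹)) := hx
  have hcont : Continuous fun h : G => h • p := continuous_id.smul continuous_const
  have himg : IsCompact ((fun h : G => h • p) ''
      closure (Set.range fun n : ℕ => (g⁻¹) ^ n * x * ((g⁻¹) ^ n)⁻¹)) :=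
    hx'.image hcont
  obtain ⟨r, hr⟩ := himg.isBounded.subset_closedBall p
  refine ⟨max r 0, le_max_right _ _, fun n => ?_⟩
  have hmem : ((g⁻¹) ^ n * x * ((g⁻¹) ^ n)⁻¹) • p ∈ (fun h : G => h • p) ''
      closure (Set.range fun n : ℕ => (g⁻¹) ^ n * x * ((g⁻¹) ^ n)⁻¹) :=
    Set.mem_image_of_mem _ (subset_closure (Set.mem_range_self n))
  have := hr hmem
  rw [Metric.mem_closedBall] at this
  have heq : (g ^ n)⁻¹ * x * g ^ n = (g⁻¹) ^ n * x * ((g⁻¹) ^ n)⁻¹ := by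
    rw [inv_pow, inv_inv]
  rw [heq]
  exact this.trans (le_max_left _ _)

lemma par_subset_stab (hNPC : NPCSpace X) (hiso : IsometricAction G X) {g : G} {γ : ℝ → X}
    (hattr : AttractsTo g γ) {x : G} (hx : x ∈ parSet g⁻¹) :
    AsympRays (fun t => x • γ t) γ := by
  obtain ⟨C₀, hC₀, hdisp⟩ := par_bounded_displacement hx (γ 0)
  obtain ⟨htend, C, hC⟩ := hattr.2 (γ 0)
  have hGeo := hNPC.1
  choose σ hσ using fun n : ℕ => hGeo (γ 0) (g ^ n • γ 0)
  set D := max (dist (γ 0) (x • γ 0)) C₀ with hD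
  have hD0 : 0 ≤ D := le_trans hC₀ (le_max_right _ _)
  obtain ⟨K, hK0, hKf⟩ := npc_fellow hNPC hD0
  set C' := max C 0 with hC'
  refine ⟨C' + K + C', fun t ht => ?_⟩
  have hev1 : ∀ᶠ n in Filter.atTop, dist (σ n t) (γ t) ≤ C := hC t ht σ hσ
  have hev2 : ∀ᶠ n in Filter.atTop, t ≤ dist (γ 0) (g ^ n • γ 0) :=
    htend.eventually_ge_atTop t
  obtain ⟨n, h1, h2⟩ := (hev1.and hev2).exists
  have hgeo1 : IsGeodesicOn (σ n) (Set.Icc 0 (dist (γ 0) (g ^ n • γ 0))) := (hσ n).2.2.2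
  have hgeo2 : IsGeodesicOn (fun s => x • σ n s) (Set.Icc 0 (dist (γ 0) (g ^ n • γ 0))) := by
    intro u hu v hv
    rw [smul_isom hiso]
    exact hgeo1 u hu v hv
  have key : dist (σ n t) (x • σ n t) ≤ K := by
    refine hKf (dist (γ 0) (g ^ n • γ 0)) (dist (γ 0) (g ^ n • γ 0)) (σ n)
      (fun s => x • σ n s) dist_nonneg dist_nonneg hgeo1 hgeo2 ?_ ?_ t ht h2 h2
    · show dist (σ n 0) (x • σ n 0) ≤ D
      rw [(hσ n).2.1]
      exact le_max_left _ _
    · show dist (σ n (dist (γ 0) (g ^ n • γ 0)))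
        (x • σ n (dist (γ 0) (g ^ n • γ 0))) ≤ D
      rw [(hσ n).2.2.1]
      have hsplit : x • (g ^ n • γ 0) = g ^ n • (((g ^ n)⁻¹ * x * g ^ n) • γ 0) := by
        rw [← mul_smul, ← mul_smul]
        congr 1
        group
      rw [hsplit, smul_isom hiso, dist_comm]
      exact (hdisp n).trans (le_max_right _ _)
  calc dist (x • γ t) (γ t)
      ≤ dist (x • γ t) (x • σ n t) + dist (x • σ n t) (σ n t) + dist (σ n t) (γ t) :=
        dist_triangle4 _ _ _ _
    _ ≤ C' + K + C' := by
        refine add_le_add (add_le_add ?_ ?_) (h1.trans (le_max_left _ _))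
        · rw [smul_isom hiso, dist_comm]
          exact h1.trans (le_max_left _ _)
        · rw [dist_comm]
          exact key

end Aux4
section Aux5

variable {X : Type*} [MetricSpace X] {G : Type*} [Group G] [TopologicalSpace G]
  [MulAction G X] [ContinuousSMul G X]

lemma stab_par_of_displacement [T2Space G] {g x : G} (hproper : ProperAction G X) (p : X)
    (R : ℝ) (hR : ∀ n : ℕ, dist (((g ^ n)⁻¹ * x * g ^ n) • p) p ≤ R) : x ∈ parSet g⁻¹ := by
  have hS : IsCompact {h : G | dist (h • p) p ≤ R} := hproper p R
  have hsub : Set.range (fun n : ℕ => (g⁻¹) ^ n * x * ((g⁻¹) ^ n)⁻¹) ⊆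
      {h : G | dist (h • p) p ≤ R} := by
    rintro _ ⟨n, rfl⟩
    show dist (((g⁻¹) ^ n * x * ((g⁻¹) ^ n)⁻¹) • p) p ≤ R
    have heq : (g⁻¹) ^ n * x * ((g⁻¹) ^ n)⁻¹ = (g ^ n)⁻¹ * x * g ^ n := by
      rw [inv_pow, inv_inv]
    rw [heq]
    exact hR n
  exact hS.of_isClosed_subset isClosed_closure (closure_minimal hsub hS.isClosed)

lemma axis_pow {g : G} {γ' : ℝ → X} {k : ℝ} (hax : ∀ t, g • γ' t = γ' (t + k)) :
    ∀ (n : ℕ) (t : ℝ), g ^ n • γ' t = γ' (t + n * k) := by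
  intro n
  induction n with
  | zero => intro t; simp
  | succ n ih =>
    intro t
    rw [pow_succ', mul_smul, ih, hax]
    congr 1
    push_cast
    ring

lemma axis_asymp (hNPC : NPCSpace X) {g : G} {γ γ' : ℝ → X} {k : ℝ}
    (hattr : AttractsTo g γ) (hk : 0 < k) (hline : IsGeodesicLine γ')
    (hax : ∀ t, g • γ' t = γ' (t + k)) :
    ∃ C₂, ∀ t, 0 ≤ t → dist (γ t) (γ' t) ≤ C₂ := by
  obtain ⟨htend, C, hC⟩ := hattr.2 (γ' 0)
  choose σ hσ using fun n : ℕ => hNPC.1 (γ 0) (g ^ n • γ' 0)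
  have hD0 : 0 ≤ max (dist (γ 0) (γ' 0)) 0 := le_max_right _ _
  obtain ⟨K, hK0, hKf⟩ := npc_fellow hNPC hD0
  refine ⟨max C 0 + K, fun t ht => ?_⟩
  have hev1 : ∀ᶠ n in Filter.atTop, dist (σ n t) (γ t) ≤ C := hC t ht σ hσ
  have hev2 : ∀ᶠ n in Filter.atTop, t ≤ dist (γ 0) (g ^ n • γ' 0) :=
    htend.eventually_ge_atTop t
  have hev3 : ∀ᶠ n : ℕ in Filter.atTop, t ≤ n * k := by
    rw [Filter.eventually_atTop]
    refine ⟨⌈t / k⌉₊, fun n hn => ?_⟩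
    have h1 : t / k ≤ (n : ℝ) := (Nat.le_ceil (t / k)).trans (by exact_mod_cast hn)
    rwa [div_le_iff₀ hk] at h1
  obtain ⟨n, ⟨h1, h2⟩, h3⟩ := ((hev1.and hev2).and hev3).exists
  have hnk0 : (0:ℝ) ≤ n * k := le_trans ht h3
  have hgeo2 : IsGeodesicOn γ' (Set.Icc 0 ((n:ℝ) * k)) := fun u _ v _ =>
    hline u trivial v trivial
  have key : dist (σ n t) (γ' t) ≤ K := by
    refine hKf (dist (γ 0) (g ^ n • γ' 0)) ((n:ℝ) * k) (σ n) γ' dist_nonneg hnk0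
      (hσ n).2.2.2 hgeo2 ?_ ?_ t ht h2 h3
    · rw [(hσ n).2.1]
      exact le_max_left _ _
    · rw [(hσ n).2.2.1]
      have := axis_pow hax n 0
      rw [zero_add] at this
      rw [this, dist_self]
      exact hD0
  calc dist (γ t) (γ' t) ≤ dist (γ t) (σ n t) + dist (σ n t) (γ' t) := dist_triangle _ _ _
    _ ≤ max C 0 + K := add_le_add (by rw [dist_comm]; exact h1.trans (le_max_left _ _)) key

lemma conj_displacement (hiso : IsometricAction G X) (g x : G) (n : ℕ) (p : X) :
    dist (((g ^ n)⁻¹ * x * g ^ n) • p) p = dist (x • (g ^ n • p)) (g ^ n • p) := by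
  rw [← smul_isom hiso (g ^ n) (((g ^ n)⁻¹ * x * g ^ n) • p) p, ← mul_smul, ← mul_smul]
  congr 2
  group

lemma caseA [T2Space G] (hNPC : NPCSpace X) (hiso : IsometricAction G X) {g x : G}
    {γ : ℝ → X} (hattr : AttractsTo g γ) (hax : IsAxial X g)
    (hstab : AsympRays (fun t => x • γ t) γ) (hproper : ProperAction G X) :
    x ∈ parSet g⁻¹ := by
  obtain ⟨γ', hline, k, hk, haxk⟩ := hax
  obtain ⟨C₂, hC₂⟩ := axis_asymp hNPC hattr hk hline haxk
  obtain ⟨Cx, hCx⟩ := hstab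
  refine stab_par_of_displacement hproper (γ' 0) (C₂ + Cx + C₂) (fun n => ?_)
  rw [conj_displacement hiso]
  have hp : g ^ n • γ' 0 = γ' ((n:ℝ) * k) := by
    have := axis_pow haxk n 0
    rwa [zero_add] at this
  rw [hp]
  have hnk0 : (0:ℝ) ≤ (n:ℝ) * k := by positivity
  calc dist (x • γ' ((n:ℝ) * k)) (γ' ((n:ℝ) * k))
      ≤ dist (x • γ' ((n:ℝ) * k)) (x • γ ((n:ℝ) * k)) + dist (x • γ ((n:ℝ) * k)) (γ ((n:ℝ) * k))
        + dist (γ ((n:ℝ) * k)) (γ' ((n:ℝ) * k)) := dist_triangle4 _ _ _ _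
    _ ≤ C₂ + Cx + C₂ := by
        refine add_le_add (add_le_add ?_ ?_) (hC₂ _ hnk0)
        · rw [smul_isom hiso, dist_comm]
          exact hC₂ _ hnk0
        · exact hCx _ hnk0

end Aux5
section Aux6

variable {X : Type*} [MetricSpace X]

lemma clog_half {m : ℕ} (hm : 2 ≤ m) :
    Nat.clog 2 (m / 2) + 1 ≤ Nat.clog 2 m ∧ Nat.clog 2 (m - m / 2) + 1 ≤ Nat.clog 2 m := by
  set j := Nat.clog 2 m with hj
  have hj1 : 1 ≤ j := Nat.clog_pos (by norm_num) hm
  have hm2 : m ≤ 2 ^ j := Nat.le_pow_clog (by norm_num) m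
  have hpow : 2 ^ j = 2 * 2 ^ (j - 1) := by
    rw [← pow_succ']
    congr 1
    omega
  have hhalf : m - m / 2 ≤ 2 ^ (j - 1) := by omega
  have hhalf' : m / 2 ≤ 2 ^ (j - 1) := by omega
  have c1 : Nat.clog 2 (m / 2) ≤ j - 1 := (Nat.clog_le_iff_le_pow (by norm_num)).2 hhalf'
  have c2 : Nat.clog 2 (m - m / 2) ≤ j - 1 := (Nat.clog_le_iff_le_pow (by norm_num)).2 hhalf
  omega

lemma chainNear {δ s : ℝ} (hGeo : GeodesicSpace X) (hδ : 0 ≤ δ) (hs : 0 ≤ s)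
    (hslim : SlimTriangles X δ) :
    ∀ m : ℕ, ∀ z : ℕ → X, (∀ i, i < m → dist (z i) (z (i + 1)) ≤ s) →
    ∀ σ : ℝ → X, IsGeodesicSegment σ 0 (dist (z 0) (z m)) (z 0) (z m) →
    ∀ t ∈ Set.Icc (0:ℝ) (dist (z 0) (z m)),
    ∃ i ≤ m, dist (σ t) (z i) ≤ δ * (Nat.clog 2 m : ℝ) + s := by
  intro m
  induction m using Nat.strong_induction_on with
  | _ m ih =>
  intro z hgap σ hσ t ht
  rcases Nat.lt_or_ge m 2 with hm | hm
  · interval_cases m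
    · refine ⟨0, le_refl 0, ?_⟩
      have ht0 : t = 0 := le_antisymm (by simpa using ht.2) ht.1
      subst ht0
      rw [hσ.2.1, dist_self]
      positivity
    · refine ⟨0, zero_le_one, ?_⟩
      have h1 : dist (σ t) (z 0) = t := by
        rw [← hσ.2.1, hσ.2.2.2 t ht 0 ⟨le_refl 0, dist_nonneg⟩, sub_zero, abs_of_nonneg ht.1]
      have h2 : t ≤ s := le_trans ht.2 (le_trans (hgap 0 (by norm_num)) (le_refl s))
      rw [h1]
      simp only [Nat.clog_one_right, Nat.cast_zero, mul_zero, zero_add]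
      exact h2
  · -- main case: m ≥ 2
    set k := m / 2 with hk
    have hk1 : 1 ≤ k := by omega
    have hkm : k < m := by omega
    have hmk : m - k < m := by omega
    obtain ⟨hc1, hc2⟩ := clog_half hm
    obtain ⟨γ₂, hγ₂⟩ := hGeo (z m) (z k)
    obtain ⟨γ₃, hγ₃⟩ := hGeo (z k) (z 0)
    obtain ⟨p, hp, hdp⟩ := hslim (z 0) (z m) (z k) σ γ₂ γ₃ hσ hγ₂ hγ₃ t ht
    have hbound : ∀ j : ℕ, (Nat.clog 2 j : ℝ) + 1 ≤ (Nat.clog 2 m : ℝ) →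
        ∀ q : X, dist (σ t) q ≤ δ → ∀ i : X, dist q i ≤ δ * (Nat.clog 2 j : ℝ) + s →
        dist (σ t) i ≤ δ * (Nat.clog 2 m : ℝ) + s := by
      intro j hj q hq i hi
      calc dist (σ t) i ≤ dist (σ t) q + dist q i := dist_triangle _ _ _
        _ ≤ δ + (δ * (Nat.clog 2 j : ℝ) + s) := add_le_add hq hi
        _ = δ * ((Nat.clog 2 j : ℝ) + 1) + s := by ring
        _ ≤ δ * (Nat.clog 2 m : ℝ) + s := by
            have := mul_le_mul_of_nonneg_left hj hδ
            linarith
    rcases hp with ⟨u, hu, rfl⟩ | ⟨u, hu, rfl⟩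
    · -- p on side from z m to z k : subchain z k .. z m
      set m' := m - k with hm'
      set w : ℕ → X := fun i => z (k + i) with hw
      have hw0 : w 0 = z k := by simp [hw]
      have hwm : w m' = z m := by
        simp only [hw, hm']
        congr 1
        omega
      have hseg' : IsGeodesicSegment (fun s' => γ₂ (dist (z m) (z k) - s')) 0
          (dist (w 0) (w m')) (w 0) (w m') := by
        rw [hw0, hwm]
        exact seg_reverse hγ₂
      have hgap' : ∀ i, i < m' → dist (w i) (w (i + 1)) ≤ s := by
        intro i hi
        have : k + i + 1 = k + (i + 1) := by omega
        rw [hw]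
        simp only []
        rw [← this]
        exact hgap (k + i) (by omega)
      set t' := dist (z m) (z k) - u with ht'
      have htmem : t' ∈ Set.Icc (0:ℝ) (dist (w 0) (w m')) := by
        rw [hw0, hwm, dist_comm (z k) (z m)]
        exact ⟨by linarith [hu.2], by linarith [hu.1]⟩
      obtain ⟨i, him, hdi⟩ := ih m' hmk w hgap' _ hseg' t' htmem
      refine ⟨k + i, by omega, ?_⟩
      refine hbound m' (by exact_mod_cast hc2) (γ₂ u) hdp (z (k + i)) ?_
      have : γ₂ u = (fun s' => γ₂ (dist (z m) (z k) - s')) t' := by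
        simp only [ht']
        congr 1
        ring
      rw [this]
      exact hdi
    · -- p on side from z k to z 0 : subchain z 0 .. z k
      have hseg' : IsGeodesicSegment (fun s' => γ₃ (dist (z k) (z 0) - s')) 0
          (dist (z 0) (z k)) (z 0) (z k) := seg_reverse hγ₃
      set t' := dist (z k) (z 0) - u with ht'
      have htmem : t' ∈ Set.Icc (0:ℝ) (dist (z 0) (z k)) := by
        rw [dist_comm (z 0) (z k)]
        exact ⟨by linarith [hu.2], by linarith [hu.1]⟩
      obtain ⟨i, him, hdi⟩ := ih k hkm z (fun i hi => hgap i (by omega)) _ hseg' t' htmem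
      refine ⟨i, by omega, ?_⟩
      refine hbound k (by exact_mod_cast hc1) (γ₃ u) hdp (z i) ?_
      have : γ₃ u = (fun s' => γ₃ (dist (z k) (z 0) - s')) t' := by
        simp only [ht']
        congr 1
        ring
      rw [this]
      exact hdi

end Aux6
section Aux7

variable {X : Type*} [MetricSpace X]

lemma morseLog {δ s a b : ℝ} (hGeo : GeodesicSpace X) (hδ : 0 ≤ δ) (hs : 0 ≤ s)
    (hslim : SlimTriangles X δ) (ha : 0 < a) (hb : 0 ≤ b)
    (m : ℕ) (z : ℕ → X)
    (hgap : ∀ i, i < m → dist (z i) (z (i + 1)) ≤ s)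
    (hlow : ∀ i j : ℕ, i ≤ m → j ≤ m → a⁻¹ * |(i:ℝ) - (j:ℝ)| - b ≤ dist (z i) (z j))
    (hup : ∀ i j : ℕ, i ≤ m → j ≤ m → dist (z i) (z j) ≤ a * |(i:ℝ) - (j:ℝ)| + b)
    (σ : ℝ → X) (hσ : IsGeodesicSegment σ 0 (dist (z 0) (z m)) (z 0) (z m)) :
    ∀ i ≤ m, ∃ u ∈ Set.Icc (0:ℝ) (dist (z 0) (z m)),
      dist (z i) (σ u) ≤ a * (a * (2 * (δ * (Nat.clog 2 m : ℝ) + s) + 2 + b)) + b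
        + (δ * (Nat.clog 2 m : ℝ) + s) := by
  intro i him
  set E : ℝ := δ * (Nat.clog 2 m : ℝ) + s with hE
  have hE0 : 0 ≤ E := add_nonneg (mul_nonneg hδ (Nat.cast_nonneg _)) hs
  set T : ℝ := dist (z 0) (z m) with hT
  have hT0 : (0:ℝ) ≤ T := dist_nonneg
  set S : Set ℝ := {t : ℝ | t ∈ Set.Icc (0:ℝ) T ∧ ∃ j, j ≤ i ∧ dist (σ t) (z j) ≤ E} with hS
  have h0S : (0:ℝ) ∈ S := by
    refine ⟨⟨le_refl 0, hT0⟩, 0, Nat.zero_le i, ?_⟩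
    rw [hσ.2.1, dist_self]
    exact hE0
  have hbdd : BddAbove S := ⟨T, fun t ht => ht.1.2⟩
  set t₀ : ℝ := sSup S with ht₀
  have ht₀0 : 0 ≤ t₀ := le_csSup hbdd h0S
  have ht₀T : t₀ ≤ T := csSup_le ⟨0, h0S⟩ (fun t ht => ht.1.2)
  obtain ⟨t₁, ht₁S, ht₁gt⟩ := exists_lt_of_lt_csSup ⟨0, h0S⟩
    (show t₀ - 1 < t₀ by linarith)
  have ht₁le : t₁ ≤ t₀ := le_csSup hbdd ht₁S
  obtain ⟨ht₁mem, j, hji, hdj⟩ := ht₁S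
  -- find k with i ≤ k ≤ m and dist (z j) (z k) ≤ 2E + 2
  have hkey : ∃ k, i ≤ k ∧ k ≤ m ∧ dist (z j) (z k) ≤ 2 * E + 2 := by
    rcases le_or_gt T (t₀ + 1) with hc | hc
    · refine ⟨m, him, le_refl m, ?_⟩
      have hd1 : dist (σ t₁) (z m) = T - t₁ := by
        rw [← hσ.2.2.1]
        exact seg_self_dist hT0 hσ.2.2.2 ht₁mem.1 ht₁mem.2 (le_refl T)
      calc dist (z j) (z m) ≤ dist (z j) (σ t₁) + dist (σ t₁) (z m) := dist_triangle _ _ _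
        _ ≤ E + (T - t₁) := by
            rw [hd1, dist_comm]
            exact add_le_add hdj (le_refl _)
        _ ≤ 2 * E + 2 := by linarith [ht₀T]
    · set t₂ : ℝ := t₀ + 1 with ht₂
      have ht₂mem : t₂ ∈ Set.Icc (0:ℝ) T := ⟨by linarith, hc.le⟩
      obtain ⟨k, hkm, hdk⟩ := chainNear hGeo hδ hs hslim m z hgap σ hσ t₂ ht₂mem
      have hknot : ¬ (k ≤ i) := by
        intro hki
        have : t₂ ∈ S := ⟨ht₂mem, k, hki, hdk⟩
        have : t₂ ≤ t₀ := le_csSup hbdd this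
        linarith
      have hik : i ≤ k := by omega
      have hσd : dist (σ t₁) (σ t₂) = t₂ - t₁ := by
        refine seg_self_dist hT0 hσ.2.2.2 ht₁mem.1 ?_ ht₂mem.2
        linarith
      refine ⟨k, hik, hkm, ?_⟩
      calc dist (z j) (z k)
          ≤ dist (z j) (σ t₁) + dist (σ t₁) (σ t₂) + dist (σ t₂) (z k) := dist_triangle4 _ _ _ _
        _ ≤ E + (t₂ - t₁) + E := by
            rw [hσd, dist_comm (z j) (σ t₁)]
            exact add_le_add (add_le_add hdj (le_refl _)) hdk
        _ ≤ 2 * E + 2 := by linarith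
  obtain ⟨k, hik, hkm, hjk⟩ := hkey
  have hjm : j ≤ m := hji.trans him
  have hcast : |(j:ℝ) - (k:ℝ)| = (k:ℝ) - (j:ℝ) := by
    rw [abs_sub_comm]
    exact abs_of_nonneg (sub_nonneg.2 (by exact_mod_cast hji.trans hik))
  have h1 : a⁻¹ * ((k:ℝ) - (j:ℝ)) - b ≤ 2 * E + 2 := by
    have := hlow j k hjm hkm
    rw [hcast] at this
    linarith [hjk]
  have h2 : (k:ℝ) - (j:ℝ) ≤ a * (2 * E + 2 + b) := by
    have h3 : a⁻¹ * ((k:ℝ) - (j:ℝ)) ≤ 2 * E + 2 + b := by linarith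
    have h4 := mul_le_mul_of_nonneg_left h3 ha.le
    rwa [← mul_assoc, mul_inv_cancel₀ (ne_of_gt ha), one_mul] at h4
  have h4 : dist (z i) (z j) ≤ a * (a * (2 * E + 2 + b)) + b := by
    have h5 := hup i j him hjm
    have hij : |(i:ℝ) - (j:ℝ)| = (i:ℝ) - (j:ℝ) :=
      abs_of_nonneg (sub_nonneg.2 (by exact_mod_cast hji))
    rw [hij] at h5
    have h6 : (i:ℝ) - (j:ℝ) ≤ (k:ℝ) - (j:ℝ) := by
      have : (i:ℝ) ≤ (k:ℝ) := by exact_mod_cast hik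
      linarith
    have h7 := mul_le_mul_of_nonneg_left (h6.trans h2) ha.le
    linarith
  refine ⟨t₁, ht₁mem, ?_⟩
  calc dist (z i) (σ t₁) ≤ dist (z i) (z j) + dist (z j) (σ t₁) := dist_triangle _ _ _
    _ ≤ a * (a * (2 * E + 2 + b)) + b + E := by
        rw [dist_comm (z j) (σ t₁)]
        exact add_le_add h4 hdj

end Aux7
section Aux8

variable {X : Type*} [MetricSpace X]

lemma sq_le_two_pow : ∀ j : ℕ, 4 ≤ j → j ^ 2 ≤ 2 ^ j := by
  intro j hj
  induction j, hj using Nat.le_induction with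
  | base => norm_num
  | succ j hj4 ih =>
    have h1 : 2 * j + 1 ≤ j ^ 2 := by nlinarith
    have h2 : (j + 1) ^ 2 = j ^ 2 + (2 * j + 1) := by ring
    calc (j + 1) ^ 2 ≤ j ^ 2 + j ^ 2 := by omega
      _ ≤ 2 ^ j + 2 ^ j := by omega
      _ = 2 ^ (j + 1) := by ring

lemma exists_r {δ s a b : ℝ} (hδ : 0 ≤ δ) (hs : 0 ≤ s) (ha : 0 < a) (hb : 0 ≤ b) :
    ∃ r : ℕ, 0 < r ∧
      a * (2 * (a * (a * (2 * (δ * (Nat.clog 2 (2 * r) : ℝ) + s) + 2 + b)) + b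
        + (δ * (Nat.clog 2 (2 * r) : ℝ) + s)) + 4 * δ + b) < (r : ℝ) := by
  set c₁ : ℝ := (2 * a * a + 1) * (δ + s) + a * a * (2 + b) + b with hc₁
  set c₂ : ℝ := a * (2 * c₁ + 4 * δ + b) with hc₂
  have hc₁0 : 0 ≤ c₁ := by positivity
  have hc₂0 : 0 ≤ c₂ := by positivity
  set j : ℕ := max 4 (⌈2 * c₂⌉₊ + 1) with hjdef
  have hj4 : 4 ≤ j := le_max_left _ _
  have hjpos : (0:ℝ) < (j:ℝ) := by positivity
  have hjc : 2 * c₂ < (j:ℝ) := by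
    have h1 : 2 * c₂ ≤ (⌈2 * c₂⌉₊ : ℝ) := Nat.le_ceil _
    have h2 : (⌈2 * c₂⌉₊ + 1 : ℕ) ≤ j := le_max_right _ _
    have h3 : ((⌈2 * c₂⌉₊ + 1 : ℕ) : ℝ) ≤ (j : ℝ) := by exact_mod_cast h2
    push_cast at h3
    linarith
  refine ⟨2 ^ j, Nat.pow_pos (by norm_num), ?_⟩
  have hclog : Nat.clog 2 (2 * 2 ^ j) = j + 1 := by
    rw [show 2 * 2 ^ j = 2 ^ (j + 1) by ring]
    exact Nat.clog_pow 2 (j + 1) (by norm_num)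
  rw [hclog]
  set E : ℝ := δ * ((j : ℕ) + 1 : ℕ) + s with hEdef
  have hEcast : E = δ * ((j:ℝ) + 1) + s := by rw [hEdef]; push_cast; ring
  have hE : E ≤ (δ + s) * ((j:ℝ) + 1) := by
    rw [hEcast]
    nlinarith [mul_nonneg hs hjpos.le]
  have hQ : a * (a * (2 * E + 2 + b)) + b + E ≤ c₁ * ((j:ℝ) + 1) := by
    have h1 : (2 * a * a + 1) * E ≤ (2 * a * a + 1) * ((δ + s) * ((j:ℝ) + 1)) :=
      mul_le_mul_of_nonneg_left hE (by positivity)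
    have h2 : a * a * (2 + b) + b ≤ (a * a * (2 + b) + b) * ((j:ℝ) + 1) := by
      nlinarith [mul_nonneg (show (0:ℝ) ≤ a * a * (2 + b) + b by positivity) hjpos.le]
    nlinarith [h1, h2]
  have hfin : a * (2 * (a * (a * (2 * E + 2 + b)) + b + E) + 4 * δ + b) ≤ c₂ * ((j:ℝ) + 1) := by
    have h1 : 2 * (a * (a * (2 * E + 2 + b)) + b + E) + 4 * δ + b
        ≤ (2 * c₁ + 4 * δ + b) * ((j:ℝ) + 1) := by
      nlinarith [hQ, mul_nonneg (show (0:ℝ) ≤ 4 * δ + b by positivity) hjpos.le]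
    calc a * (2 * (a * (a * (2 * E + 2 + b)) + b + E) + 4 * δ + b)
        ≤ a * ((2 * c₁ + 4 * δ + b) * ((j:ℝ) + 1)) := mul_le_mul_of_nonneg_left h1 ha.le
      _ = c₂ * ((j:ℝ) + 1) := by rw [hc₂]; ring
  have hpow : ((j:ℝ)) ^ 2 ≤ ((2:ℝ)) ^ j := by
    have := sq_le_two_pow j hj4
    exact_mod_cast this
  have hlast : c₂ * ((j:ℝ) + 1) < (2:ℝ) ^ j := by
    have hj4' : (4:ℝ) ≤ (j:ℝ) := by exact_mod_cast hj4
    have h1 : c₂ * ((j:ℝ) + 1) ≤ 2 * c₂ * (j:ℝ) := by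
      nlinarith [mul_nonneg hc₂0 (show (0:ℝ) ≤ (j:ℝ) - 1 by linarith)]
    have h2 : 2 * c₂ * (j:ℝ) < (j:ℝ) * (j:ℝ) := mul_lt_mul_of_pos_right hjc hjpos
    calc c₂ * ((j:ℝ) + 1) ≤ 2 * c₂ * (j:ℝ) := h1
      _ < (j:ℝ) * (j:ℝ) := h2
      _ = (j:ℝ) ^ 2 := by ring
      _ ≤ (2:ℝ) ^ j := hpow
  have hcast : ((2 ^ j : ℕ) : ℝ) = (2:ℝ) ^ j := by push_cast; ring
  rw [hcast]
  calc a * (2 * (a * (a * (2 * E + 2 + b)) + b + E) + 4 * δ + b)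
      ≤ c₂ * ((j:ℝ) + 1) := hfin
    _ < (2:ℝ) ^ j := hlast

end Aux8
section Aux9

variable {X : Type*} [MetricSpace X]

lemma seg_point_sum {η : ℝ → X} {x y : X} (hη : IsGeodesicSegment η 0 (dist x y) x y)
    {u : ℝ} (hu : u ∈ Set.Icc (0:ℝ) (dist x y)) :
    dist x (η u) = u ∧ dist (η u) y = dist x y - u := by
  constructor
  · rw [← hη.2.1, hη.2.2.2 0 ⟨le_refl 0, dist_nonneg⟩ u hu, abs_of_nonpos (by linarith [hu.1])]
    ring
  · have h2 := hη.2.2.2 u hu (dist x y) ⟨dist_nonneg, le_refl _⟩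
    rw [hη.2.2.1] at h2
    rw [h2, abs_of_nonpos (by linarith [hu.2])]
    ring

lemma vertical_case {Q c rA : ℝ} {zi zj wx q : X} {Γset : Set X} (hwΓ : wx ∈ Γset)
    (hsum : dist zj q + dist q wx = dist zj wx)
    (hiq : dist zi q ≤ Q + c)
    (hij : rA ≤ dist zi zj) :
    Metric.infDist zi Γset ≤ 2 * Q + 2 * c + dist zj wx - rA := by
  have h1 : dist zi zj - dist zi q ≤ dist zj q := by
    have h := dist_triangle zi q zj
    rw [dist_comm q zj] at h
    linarith
  have h2 : Metric.infDist zi Γset ≤ dist zi wx := Metric.infDist_le_dist_of_mem hwΓ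
  have h3 : dist zi wx ≤ dist zi q + dist q wx := dist_triangle _ _ _
  linarith

lemma morseBootstrap {δ s a b : ℝ} (hGeo : GeodesicSpace X) (hδ : 0 ≤ δ) (hs : 0 ≤ s)
    (hslim : SlimTriangles X δ) (ha : 0 < a) (hb : 0 ≤ b)
    (r : ℕ) (hr0 : 0 < r)
    (hr : a * (2 * (a * (a * (2 * (δ * (Nat.clog 2 (2 * r) : ℝ) + s) + 2 + b)) + b
        + (δ * (Nat.clog 2 (2 * r) : ℝ) + s)) + 4 * δ + b) < (r : ℝ))
    (m : ℕ) (z : ℕ → X)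
    (hgap : ∀ i, i < m → dist (z i) (z (i + 1)) ≤ s)
    (hlow : ∀ i j : ℕ, i ≤ m → j ≤ m → a⁻¹ * |(i:ℝ) - (j:ℝ)| - b ≤ dist (z i) (z j))
    (hup : ∀ i j : ℕ, i ≤ m → j ≤ m → dist (z i) (z j) ≤ a * |(i:ℝ) - (j:ℝ)| + b)
    (σ : ℝ → X) (hσ : IsGeodesicSegment σ 0 (dist (z 0) (z m)) (z 0) (z m)) :
    ∀ i ≤ m, Metric.infDist (z i) (σ '' Set.Icc 0 (dist (z 0) (z m)))
      ≤ max (a * (r:ℝ) + b)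
          (a * (a * (2 * (δ * (Nat.clog 2 (2 * r) : ℝ) + s) + 2 + b)) + b
            + (δ * (Nat.clog 2 (2 * r) : ℝ) + s) + 2 * δ) := by
  set E : ℝ := δ * (Nat.clog 2 (2 * r) : ℝ) + s with hE
  set Q : ℝ := a * (a * (2 * E + 2 + b)) + b + E with hQ
  set T : ℝ := dist (z 0) (z m) with hTd
  have hT0 : (0:ℝ) ≤ T := dist_nonneg
  set Γset : Set X := σ '' Set.Icc 0 T with hΓd
  have hΓc : IsCompact Γset := by
    refine (isCompact_Icc).image_of_continuousOn ?_
    refine LipschitzOnWith.continuousOn (K := 1) (LipschitzOnWith.of_dist_le_mul ?_)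
    intro u hu v hv
    rw [hσ.2.2.2 u hu v hv, Real.dist_eq]
    simp
  have hne : Γset.Nonempty := ⟨z 0, 0, ⟨le_refl 0, hT0⟩, hσ.2.1⟩
  -- argmax
  obtain ⟨i₀, hi₀mem, hi₀max⟩ := Finset.exists_max_image (Finset.range (m + 1))
    (fun i => Metric.infDist (z i) Γset) ⟨0, Finset.mem_range.2 (by omega)⟩
  have hi₀m : i₀ ≤ m := by
    have := Finset.mem_range.1 hi₀mem
    omega
  set F : ℝ := Metric.infDist (z i₀) Γset with hFd
  set H : ℝ := max (a * (r:ℝ) + b) (Q + 2 * δ) with hHd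
  suffices hF : F ≤ H by
    intro i him
    calc Metric.infDist (z i) Γset ≤ F := hi₀max i (Finset.mem_range.2 (by omega))
      _ ≤ H := hF
  -- boundary cases
  rcases Nat.lt_or_ge i₀ r with hcase | hge1
  · have h1 : Metric.infDist (z i₀) Γset ≤ dist (z i₀) (z 0) :=
      Metric.infDist_le_dist_of_mem ⟨0, ⟨le_refl 0, hT0⟩, hσ.2.1⟩
    have h2 : dist (z i₀) (z 0) ≤ a * (i₀:ℝ) + b := by
      have := hup i₀ 0 hi₀m (by omega)
      simpa using this
    have h3 : a * (i₀:ℝ) ≤ a * (r:ℝ) :=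
      mul_le_mul_of_nonneg_left (by exact_mod_cast hcase.le) ha.le
    refine le_trans (le_trans h1 (by linarith)) (le_max_left _ _)
  rcases Nat.lt_or_ge m (i₀ + r) with hcase | hge2
  · have h1 : Metric.infDist (z i₀) Γset ≤ dist (z i₀) (z m) :=
      Metric.infDist_le_dist_of_mem ⟨T, ⟨hT0, le_refl T⟩, hσ.2.2.1⟩
    have h2 : dist (z i₀) (z m) ≤ a * |(i₀:ℝ) - (m:ℝ)| + b := hup i₀ m hi₀m (le_refl m)
    have habs : |(i₀:ℝ) - (m:ℝ)| = (m:ℝ) - (i₀:ℝ) := by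
      rw [abs_sub_comm]
      exact abs_of_nonneg (sub_nonneg.2 (by exact_mod_cast hi₀m))
    have h3 : (m:ℝ) - (i₀:ℝ) ≤ (r:ℝ) := by
      have : (m:ℝ) ≤ (i₀:ℝ) + (r:ℝ) := by exact_mod_cast hcase.le
      linarith
    rw [habs] at h2
    have h4 : a * ((m:ℝ) - (i₀:ℝ)) ≤ a * (r:ℝ) := mul_le_mul_of_nonneg_left h3 ha.le
    refine le_trans (le_trans h1 (by linarith)) (le_max_left _ _)
  -- main case
  set j₁ : ℕ := i₀ - r with hj₁d
  set j₂ : ℕ := i₀ + r with hj₂d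
  have hj₁m : j₁ ≤ m := by omega
  have hj₂m : j₂ ≤ m := by omega
  set w : ℕ → X := fun t => z (j₁ + t) with hwd
  have hw0 : w 0 = z j₁ := by simp [hwd]
  have hw2r : w (2 * r) = z j₂ := by
    simp only [hwd]
    congr 1
    omega
  have hwr : w r = z i₀ := by
    simp only [hwd]
    congr 1
    omega
  obtain ⟨Λ, hΛ⟩ := hGeo (z j₁) (z j₂)
  have hΛ' : IsGeodesicSegment Λ 0 (dist (w 0) (w (2 * r))) (w 0) (w (2 * r)) := by
    rw [hw0, hw2r]
    exact hΛ
  have hgap' : ∀ t, t < 2 * r → dist (w t) (w (t + 1)) ≤ s := by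
    intro t htr
    show dist (z (j₁ + t)) (z (j₁ + (t + 1))) ≤ s
    rw [show j₁ + (t + 1) = (j₁ + t) + 1 by omega]
    exact hgap (j₁ + t) (by omega)
  have hcast2 : ∀ t t' : ℕ, ((j₁ + t : ℕ):ℝ) - ((j₁ + t' : ℕ):ℝ) = (t:ℝ) - (t':ℝ) := by
    intro t t'
    push_cast
    ring
  have hlow' : ∀ t t' : ℕ, t ≤ 2 * r → t' ≤ 2 * r →
      a⁻¹ * |(t:ℝ) - (t':ℝ)| - b ≤ dist (w t) (w t') := by
    intro t t' htr htr'
    have := hlow (j₁ + t) (j₁ + t') (by omega) (by omega)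
    rwa [hcast2 t t'] at this
  have hup' : ∀ t t' : ℕ, t ≤ 2 * r → t' ≤ 2 * r →
      dist (w t) (w t') ≤ a * |(t:ℝ) - (t':ℝ)| + b := by
    intro t t' htr htr'
    have := hup (j₁ + t) (j₁ + t') (by omega) (by omega)
    rwa [hcast2 t t'] at this
  obtain ⟨v, hv, hdv⟩ := morseLog hGeo hδ hs hslim ha hb (2 * r) w hgap' hlow' hup' Λ hΛ'
    r (by omega)
  rw [hwr] at hdv
  have hdvQ : dist (z i₀) (Λ v) ≤ Q := hdv
  have hv' : v ∈ Set.Icc (0:ℝ) (dist (z j₁) (z j₂)) := by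
    rwa [hw0, hw2r] at hv
  -- attach points on the geodesic
  obtain ⟨w₁, hw₁Γ, hw₁d⟩ := hΓc.exists_infDist_eq_dist hne (z j₁)
  obtain ⟨w₂, hw₂Γ, hw₂d⟩ := hΓc.exists_infDist_eq_dist hne (z j₂)
  have hFw₁ : dist (z j₁) w₁ ≤ F := by
    rw [← hw₁d]
    exact hi₀max j₁ (Finset.mem_range.2 (by omega))
  have hFw₂ : dist (z j₂) w₂ ≤ F := by
    rw [← hw₂d]
    exact hi₀max j₂ (Finset.mem_range.2 (by omega))
  -- QI lower bounds
  have habs₁ : |(i₀:ℝ) - (j₁:ℝ)| = (r:ℝ) := by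
    have h1 : ((j₁:ℕ):ℝ) = (i₀:ℝ) - (r:ℝ) := by
      rw [hj₁d]
      push_cast [Nat.cast_sub hge1]
      ring
    rw [h1, abs_of_nonneg (by linarith [show (0:ℝ) ≤ (r:ℝ) from Nat.cast_nonneg r])]
    ring
  have habs₂ : |(i₀:ℝ) - (j₂:ℝ)| = (r:ℝ) := by
    have h1 : ((j₂:ℕ):ℝ) = (i₀:ℝ) + (r:ℝ) := by rw [hj₂d]; push_cast; ring
    rw [h1, show (i₀:ℝ) - ((i₀:ℝ) + (r:ℝ)) = -(r:ℝ) by ring, abs_neg,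
      abs_of_nonneg (Nat.cast_nonneg r)]
  have hlow₁ : a⁻¹ * (r:ℝ) - b ≤ dist (z i₀) (z j₁) := by
    have := hlow i₀ j₁ hi₀m hj₁m
    rwa [habs₁] at this
  have hlow₂ : a⁻¹ * (r:ℝ) - b ≤ dist (z i₀) (z j₂) := by
    have := hlow i₀ j₂ hi₀m hj₂m
    rwa [habs₂] at this
  have hrinv : 2 * Q + 4 * δ + b < a⁻¹ * (r:ℝ) := by
    have h1 := mul_lt_mul_of_pos_left hr (inv_pos.2 ha)
    rwa [← mul_assoc, inv_mul_cancel₀ (ne_of_gt ha), one_mul] at h1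
  -- slim triangle 1 : (z j₁) (z j₂) w₂
  obtain ⟨η₂, hη₂⟩ := hGeo (z j₂) w₂
  obtain ⟨ζ, hζ⟩ := hGeo w₂ (z j₁)
  obtain ⟨p, hp, hdp⟩ := hslim (z j₁) (z j₂) w₂ Λ η₂ ζ hΛ hη₂ hζ v hv'
  rcases hp with ⟨u', hu', rfl⟩ | ⟨u', hu', rfl⟩
  · -- p on segment z j₂ → w₂ : vertical contradiction at j₂
    exfalso
    obtain ⟨hs1, hs2⟩ := seg_point_sum hη₂ hu'
    have hiq : dist (z i₀) (η₂ u') ≤ Q + δ := by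
      calc dist (z i₀) (η₂ u') ≤ dist (z i₀) (Λ v) + dist (Λ v) (η₂ u') := dist_triangle _ _ _
        _ ≤ Q + δ := add_le_add hdvQ hdp
    have := vertical_case hw₂Γ (by linarith) hiq hlow₂
    have hcontra : F ≤ 2 * Q + 2 * δ + dist (z j₂) w₂ - (a⁻¹ * (r:ℝ) - b) := by
      rw [hFd]
      exact this
    linarith
  · -- p on segment w₂ → z j₁ : second slim triangle
    obtain ⟨η₁, hη₁⟩ := hGeo (z j₁) w₁
    obtain ⟨uu₁, huu₁, huu₁eq⟩ := hw₁Γ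
    obtain ⟨uu₂, huu₂, huu₂eq⟩ := hw₂Γ
    have hw₁Γ : w₁ ∈ Γset := ⟨uu₁, huu₁, huu₁eq⟩
    obtain ⟨ν, hν, hνsub⟩ := subseg hσ.2.2.2 huu₁ huu₂
    rw [huu₁eq, huu₂eq] at hν hνsub
    obtain ⟨q, hq, hdq⟩ := hslim w₂ (z j₁) w₁ ζ η₁ ν hζ hη₁ hν u' hu'
    have hiq : ∀ qq : X, dist (ζ u') qq ≤ δ → dist (z i₀) qq ≤ Q + 2 * δ := by
      intro qq hqq
      calc dist (z i₀) qq ≤ dist (z i₀) (Λ v) + dist (Λ v) (ζ u') + dist (ζ u') qq :=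
            dist_triangle4 _ _ _ _
        _ ≤ Q + δ + δ := add_le_add (add_le_add hdvQ hdp) hqq
        _ = Q + 2 * δ := by ring
    rcases hq with ⟨u'', hu'', rfl⟩ | ⟨u'', hu'', rfl⟩
    · -- q on segment z j₁ → w₁ : vertical contradiction at j₁
      exfalso
      obtain ⟨hs1, hs2⟩ := seg_point_sum hη₁ hu''
      have := vertical_case hw₁Γ (by linarith) (hiq (η₁ u'') hdq) hlow₁
      have hcontra : F ≤ 2 * Q + 2 * (2 * δ) + dist (z j₁) w₁ - (a⁻¹ * (r:ℝ) - b) := by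
        rw [hFd]
        exact this
      linarith
    · -- q on ν : inside the geodesic image
      have hqΓ : ν u'' ∈ Γset := hνsub ⟨u'', hu'', rfl⟩
      have h1 : F ≤ dist (z i₀) (ν u'') := by
        rw [hFd]
        exact Metric.infDist_le_dist_of_mem hqΓ
      have h2 := hiq (ν u'') hdq
      refine le_trans (by linarith : F ≤ Q + 2 * δ) (le_max_right _ _)

end Aux9
section Aux10

variable {X : Type*} [MetricSpace X] {G : Type*} [Group G] [TopologicalSpace G]
  [MulAction G X] [ContinuousSMul G X]

lemma qi_near_ray {δ : ℝ} (hNPC : NPCSpace X) (hδ0 : 0 ≤ δ) (hslim : SlimTriangles X δ)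
    {g : G} {γ : ℝ → X} (hattr : AttractsTo g γ) {p : X} {a b : ℝ}
    (ha : 0 < a) (hb : 0 ≤ b)
    (hQI : ∀ m n : ℤ, a⁻¹ * |(m:ℝ) - (n:ℝ)| - b ≤ dist (g ^ m • p) (g ^ n • p) ∧
      dist (g ^ m • p) (g ^ n • p) ≤ a * |(m:ℝ) - (n:ℝ)| + b) :
    ∃ B, ∀ n : ℕ, ∃ t, 0 ≤ t ∧ dist (g ^ n • p) (γ t) ≤ B := by
  have hGeo := hNPC.1
  -- ℕ-indexed quasi-geodesic bounds
  have hlowN : ∀ i j : ℕ, a⁻¹ * |(i:ℝ) - (j:ℝ)| - b ≤ dist (g ^ i • p) (g ^ j • p) := by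
    intro i j
    have h := (hQI i j).1
    rw [zpow_natCast, zpow_natCast] at h
    push_cast at h
    exact h
  have hupN : ∀ i j : ℕ, dist (g ^ i • p) (g ^ j • p) ≤ a * |(i:ℝ) - (j:ℝ)| + b := by
    intro i j
    have h := (hQI i j).2
    rw [zpow_natCast, zpow_natCast] at h
    push_cast at h
    exact h
  set s : ℝ := a + b with hsd
  have hs : 0 ≤ s := by positivity
  have hgapN : ∀ i : ℕ, dist (g ^ i • p) (g ^ (i + 1) • p) ≤ s := by
    intro i
    have h := hupN i (i + 1)
    have : |(i:ℝ) - ((i:ℕ) + 1 : ℕ)| = 1 := by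
      push_cast
      rw [show (i:ℝ) - ((i:ℝ) + 1) = -1 by ring]
      norm_num
    rw [this] at h
    simpa [hsd] using h
  obtain ⟨r, hr0, hr⟩ := exists_r hδ0 hs ha hb
  set E : ℝ := δ * (Nat.clog 2 (2 * r) : ℝ) + s with hE
  set Q : ℝ := a * (a * (2 * E + 2 + b)) + b + E with hQ
  set Hm : ℝ := max (a * (r:ℝ) + b) (Q + 2 * δ) with hHm
  -- geodesics from g^0 • p to g^m • p
  choose Γ hΓ using fun m : ℕ => hGeo (g ^ 0 • p) (g ^ m • p)
  -- geodesics from γ 0 to g^m • p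
  obtain ⟨htend, C, hC⟩ := hattr.2 p
  choose σ hσ using fun m : ℕ => hGeo (γ 0) (g ^ m • p)
  set D : ℝ := max (dist (g ^ 0 • p) (γ 0)) 0 with hD
  have hD0 : 0 ≤ D := le_max_right _ _
  obtain ⟨K, hK0, hKf⟩ := npc_fellow hNPC hD0
  refine ⟨2 * Hm + 2 + K + C, fun n => ?_⟩
  set A : ℝ := dist (g ^ 0 • p) (g ^ n • p) with hA
  have hA0 : 0 ≤ A := dist_nonneg
  refine ⟨A, hA0, ?_⟩
  -- eventual facts in m
  have hAtendlow : Filter.Tendsto (fun m : ℕ => a⁻¹ * (m:ℝ) - b) Filter.atTop Filter.atTop := by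
    apply Filter.tendsto_atTop_add_const_right
    exact (tendsto_natCast_atTop_atTop).const_mul_atTop (inv_pos.2 ha)
  have hAtend : Filter.Tendsto (fun m : ℕ => dist (g ^ 0 • p) (g ^ m • p))
      Filter.atTop Filter.atTop := by
    refine Filter.tendsto_atTop_mono (fun m => ?_) hAtendlow
    have h := hlowN 0 m
    rw [Nat.cast_zero, zero_sub, abs_neg, abs_of_nonneg (Nat.cast_nonneg m)] at h
    exact h
  have hev1 : ∀ᶠ m : ℕ in Filter.atTop, A ≤ dist (g ^ 0 • p) (g ^ m • p) :=
    hAtend.eventually_ge_atTop A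
  have hev2 : ∀ᶠ m : ℕ in Filter.atTop, A ≤ dist (γ 0) (g ^ m • p) :=
    htend.eventually_ge_atTop A
  have hev3 : ∀ᶠ m : ℕ in Filter.atTop, dist (σ m A) (γ A) ≤ C := hC A hA0 σ hσ
  have hev4 : ∀ᶠ m : ℕ in Filter.atTop, n ≤ m := Filter.eventually_ge_atTop n
  obtain ⟨m, ⟨⟨h1, h2⟩, h3⟩, h4⟩ := ((hev1.and hev2).and hev3).and hev4 |>.exists
  -- Morse: g^n • p is near the geodesic Γ m
  have hmorse := morseBootstrap hGeo hδ0 hs hslim ha hb r hr0 hr m (fun i => g ^ i • p)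
    (fun i _ => hgapN i) (fun i j _ _ => hlowN i j) (fun i j _ _ => hupN i j) (Γ m) (hΓ m)
    n h4
  have hne : ((Γ m) '' Set.Icc 0 (dist (g ^ 0 • p) (g ^ m • p))).Nonempty :=
    ⟨g ^ 0 • p, 0, ⟨le_refl 0, dist_nonneg⟩, (hΓ m).2.1⟩
  have hlt : Metric.infDist (g ^ n • p) ((Γ m) '' Set.Icc 0 (dist (g ^ 0 • p) (g ^ m • p)))
      < Hm + 1 := lt_of_le_of_lt hmorse (lt_add_one _)
  obtain ⟨y, hyΓ, hydist⟩ := (Metric.infDist_lt_iff hne).1 hlt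
  obtain ⟨u, hu, rfl⟩ := hyΓ
  -- compare u with A
  have hu0 : dist (g ^ 0 • p) (Γ m u) = u := (seg_point_sum (hΓ m) hu).1
  have habs : |u - A| ≤ Hm + 1 := by
    have h := abs_dist_sub_le (Γ m u) (g ^ n • p) (g ^ 0 • p)
    rw [dist_comm (Γ m u) (g ^ 0 • p), dist_comm (g ^ n • p) (g ^ 0 • p)] at h
    rw [hu0, ← hA] at h
    rw [dist_comm (Γ m u) (g ^ n • p)] at h
    exact h.trans hydist.le
  have hAmem : A ∈ Set.Icc (0:ℝ) (dist (g ^ 0 • p) (g ^ m • p)) := ⟨hA0, h1⟩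
  have hshift : dist (Γ m u) (Γ m A) = |u - A| := (hΓ m).2.2.2 u hu A hAmem
  have hnear : dist (g ^ n • p) (Γ m A) ≤ 2 * Hm + 2 := by
    calc dist (g ^ n • p) (Γ m A) ≤ dist (g ^ n • p) (Γ m u) + dist (Γ m u) (Γ m A) :=
          dist_triangle _ _ _
      _ ≤ (Hm + 1) + (Hm + 1) := add_le_add hydist.le (by rw [hshift]; exact habs)
      _ = 2 * Hm + 2 := by ring
  -- base change : compare Γ m with σ m at parameter A
  have hfellow : dist (Γ m A) (σ m A) ≤ K := by
    refine hKf (dist (g ^ 0 • p) (g ^ m • p)) (dist (γ 0) (g ^ m • p)) (Γ m) (σ m)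
      dist_nonneg dist_nonneg (hΓ m).2.2.2 (hσ m).2.2.2 ?_ ?_ A hA0 h1 h2
    · rw [(hΓ m).2.1, (hσ m).2.1]
      exact le_max_left _ _
    · rw [(hΓ m).2.2.1, (hσ m).2.2.1, dist_self]
      exact hD0
  calc dist (g ^ n • p) (γ A)
      ≤ dist (g ^ n • p) (Γ m A) + dist (Γ m A) (σ m A) + dist (σ m A) (γ A) :=
        dist_triangle4 _ _ _ _
    _ ≤ 2 * Hm + 2 + K + C := by
        refine add_le_add (add_le_add hnear hfellow) h3

lemma caseB [T2Space G] (hNPC : NPCSpace X) (hiso : IsometricAction G X) {g x : G}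
    {γ : ℝ → X} (hattr : AttractsTo g γ)
    (hhyp : ProperSpace X ∧ (∃ δ : ℝ, GromovHyperbolic X δ) ∧ QIHyperbolic X g)
    (hstab : AsympRays (fun t => x • γ t) γ) (hproper : ProperAction G X) :
    x ∈ parSet g⁻¹ := by
  obtain ⟨_, ⟨δ, hδ0, hslim⟩, p, a, b, ha, hb, hQI⟩ := hhyp
  obtain ⟨B, hB⟩ := qi_near_ray hNPC hδ0 hslim hattr ha hb hQI
  obtain ⟨Cx, hCx⟩ := hstab
  refine stab_par_of_displacement hproper p (B + Cx + B) (fun n => ?_)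
  rw [conj_displacement hiso]
  obtain ⟨t, ht0, htB⟩ := hB n
  calc dist (x • (g ^ n • p)) (g ^ n • p)
      ≤ dist (x • (g ^ n • p)) (x • γ t) + dist (x • γ t) (γ t) + dist (γ t) (g ^ n • p) :=
        dist_triangle4 _ _ _ _
    _ ≤ B + Cx + B := by
        refine add_le_add (add_le_add ?_ (hCx t ht0)) ?_
        · rw [smul_isom hiso]
          exact htB
        · rw [dist_comm]
          exact htB

end Aux10
/-- Let `X` be an NPC space, `G` a locally compact group acting
continuously by isometries, and `g ∈ G` with unbounded action and attracting point
(the boundary point of the ray `γ`). Then `par_G(g⁻¹) ≤ G_ξ`; if moreover `g` is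
hyperbolic and the action proper, then `par_G(g⁻¹) = G_ξ`. -/
theorem parabolic_le_endStabilizer
    {X G : Type*} [MetricSpace X] [Group G] [TopologicalSpace G]
    [IsTopologicalGroup G] [LocallyCompactSpace G] [T2Space G]
    [MulAction G X] [ContinuousSMul G X]
    (hNPC : NPCSpace X) (hiso : IsometricAction G X)
    (g : G) (γ : ℝ → X)
    (hunb : ¬ BoundedElt X g) (hattr : AttractsTo g γ) :
    parSet g⁻¹ ⊆ (endStabilizer hiso γ : Set G) ∧
    (IsHyperbolicIsom X g → ProperAction G X →
      parSet g⁻¹ = (endStabilizer hiso γ : Set G)) := by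
  
  constructor
  · intro x hx
    show AsympRays (fun t => x • γ t) γ
    exact par_subset_stab hNPC hiso hattr hx
  · intro hhyp hproper
    apply Set.Subset.antisymm
    · intro x hx
      show AsympRays (fun t => x • γ t) γ
      exact par_subset_stab hNPC hiso hattr hx
    · intro x hx
      have hstab : AsympRays (fun t => x • γ t) γ := hx
      rcases hhyp with ⟨_, _, hax⟩ | hB
      · exact caseA hNPC hiso hattr hax hstab hproper
      · exact caseB hNPC hiso hattr hB hstab hproper
end

section
/- Let X be an NPC space, let G be a t.d.l.c. group acting properly and continuously by isometries on X, let g ∈ G be hyperbolic with attracting point ξ₊ and repelling point ξ₋, and let U be an open subgroup of G. Then the product set U_{ξ₊}U_{ξ₋} = (U ∩ G_{ξ₊})(U ∩ G_{ξ₋}) is a neighbourhood of the identity in G. -/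
open Filter Set Topology Pointwise MeasureTheory

section Statement6Aux

section GeoHelpers

variable {X : Type*} [MetricSpace X]

/-- Reversal of a geodesic parametrization. -/
lemma isGeodesicOn_reverse {γ : ℝ → X} {L : ℝ} (h : IsGeodesicOn γ (Icc 0 L)) :
    IsGeodesicOn (fun s => γ (L - s)) (Icc 0 L) := by
  intro u hu v hv
  have h1 : L - u ∈ Icc 0 L := ⟨by linarith [hu.2], by linarith [hu.1]⟩
  have h2 : L - v ∈ Icc 0 L := ⟨by linarith [hv.2], by linarith [hv.1]⟩
  have := h (L - u) h1 (L - v) h2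
  simpa [abs_sub_comm, sub_sub_sub_cancel_left] using this

/-- midpoints sharing one endpoint, CAT(0). -/
lemma cat0_half (hX : CAT0 X) (a b b' m n : X)
    (hm1 : dist a m = dist a b / 2) (hm2 : dist m b = dist a b / 2)
    (hn1 : dist a n = dist a b' / 2) (hn2 : dist n b' = dist a b' / 2) :
    dist m n ≤ dist b b' / 2 := by
  have CN := hX.2
  have h1 : dist n m ^ 2 ≤ (dist n a ^ 2 + dist n b ^ 2) / 2 - dist a b ^ 2 / 4 :=
    CN n a b m hm1 (by rwa [dist_comm b m])
  have h2 : dist b n ^ 2 ≤ (dist b a ^ 2 + dist b b' ^ 2) / 2 - dist a b' ^ 2 / 4 :=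
    CN b a b' n hn1 (by rwa [dist_comm b' n])
  have hna : dist n a = dist a b' / 2 := by rw [dist_comm]; exact hn1
  have hab : dist b a = dist a b := dist_comm b a
  have hnb : dist n b = dist b n := dist_comm n b
  have key : dist n m ^ 2 ≤ (dist b b' / 2) ^ 2 := by
    rw [hna, hnb] at h1
    rw [hab] at h2
    nlinarith [h1, h2]
  have h3 : dist m n = dist n m := dist_comm m n
  nlinarith [dist_nonneg (x := n) (y := m), dist_nonneg (x := b) (y := b'), key]

/-- midpoint comparison in CAT(0). -/
lemma cat0_midpoint (hX : CAT0 X) (a b a' b' m m' : X)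
    (hm1 : dist a m = dist a b / 2) (hm2 : dist m b = dist a b / 2)
    (hm1' : dist a' m' = dist a' b' / 2) (hm2' : dist m' b' = dist a' b' / 2) :
    dist m m' ≤ (dist a a' + dist b b') / 2 := by
  obtain ⟨γ, hγ0L, hγ0, hγL, hγ⟩ := hX.1 a b'
  set d := dist a b' with hd
  have hd0 : 0 ≤ d := dist_nonneg
  have hmem1 : (0:ℝ) ∈ Icc 0 d := ⟨le_refl 0, hd0⟩
  have hmem2 : d/2 ∈ Icc 0 d := ⟨by linarith, by linarith⟩
  have hmem3 : d ∈ Icc 0 d := ⟨hd0, le_refl d⟩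
  set n := γ (d/2) with hn
  have hn1 : dist a n = d / 2 := by
    rw [← hγ0, hn, hγ 0 hmem1 (d/2) hmem2]
    rw [abs_of_nonpos (by linarith)]; ring
  have hn2 : dist n b' = d / 2 := by
    rw [← hγL, hn, hγ (d/2) hmem2 d hmem3]
    rw [abs_of_nonpos (by linarith)]; ring
  have step1 : dist m n ≤ dist b b' / 2 :=
    cat0_half hX a b b' m n hm1 hm2 hn1 hn2
  have step2 : dist n m' ≤ dist a a' / 2 := by
    have := cat0_half hX b' a a' n m' (by rw [dist_comm b' n, dist_comm b' a, ← hd]; exact hn2)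
      (by rw [dist_comm n a, dist_comm b' a, ← hd]; exact hn1)
      (by rw [dist_comm b' m', dist_comm b' a']; exact hm2')
      (by rw [dist_comm m' a', dist_comm b' a']; exact hm1')
    exact this
  calc dist m m' ≤ dist m n + dist n m' := dist_triangle _ _ _
    _ ≤ dist b b' / 2 + dist a a' / 2 := add_le_add step1 step2
    _ = (dist a a' + dist b b') / 2 := by ring

end GeoHelpers

section Comparison

variable {X : Type*} [MetricSpace X]

lemma geodesic_continuousOn {γ : ℝ → X} {L : ℝ} (h : IsGeodesicOn γ (Icc 0 L)) :
    ContinuousOn γ (Icc 0 L) := by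
  have : LipschitzOnWith 1 γ (Icc 0 L) := by
    apply LipschitzOnWith.of_dist_le_mul
    intro u hu v hv
    rw [h u hu v hv, Real.dist_eq, NNReal.coe_one, one_mul]
  exact this.continuousOn

lemma cat0_comparison (hX : CAT0 X) {L : ℝ} {σ τ : ℝ → X}
    (hσ : IsGeodesicOn σ (Icc 0 L)) (hτ : IsGeodesicOn τ (Icc 0 L)) (hL : 0 ≤ L) :
    ∀ t ∈ Icc 0 L, dist (σ t) (τ t) ≤ max (dist (σ 0) (τ 0)) (dist (σ L) (τ L)) := by
  by_contra hcon
  push_neg at hcon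
  obtain ⟨t₁, ht₁, hgt⟩ := hcon
  set f : ℝ → ℝ := fun t => dist (σ t) (τ t) with hf
  have hcont : ContinuousOn f (Icc 0 L) :=
    continuous_dist.comp_continuousOn
      ((geodesic_continuousOn hσ).prodMk (geodesic_continuousOn hτ))
  obtain ⟨t₀, ht₀, hmax⟩ :=
    isCompact_Icc.exists_isMaxOn (nonempty_Icc.2 hL) hcont
  set M := f t₀ with hM
  have hMgt : max (dist (σ 0) (τ 0)) (dist (σ L) (τ L)) < M :=
    lt_of_lt_of_le hgt (hmax ht₁)
  set A : Set ℝ := Icc 0 L ∩ f ⁻¹' {M} with hA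
  have hAclosed : IsClosed A :=
    hcont.preimage_isClosed_of_isClosed isClosed_Icc isClosed_singleton
  have hAne : A.Nonempty := ⟨t₀, ht₀, rfl⟩
  have hAbdd : BddBelow A := BddBelow.mono inter_subset_left bddBelow_Icc
  set ts := sInf A with hts
  have htsA : ts ∈ A := hAclosed.csInf_mem hAne hAbdd
  obtain ⟨⟨hts0, htsL⟩, htsM⟩ := htsA
  have htsM' : f ts = M := htsM
  have hne0 : ts ≠ 0 := by
    intro h0
    rw [h0] at htsM'
    have : f 0 ≤ max (dist (σ 0) (τ 0)) (dist (σ L) (τ L)) := le_max_left _ _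
    rw [htsM'] at this; exact absurd this (not_le.2 hMgt)
  have hneL : ts ≠ L := by
    intro h0
    rw [h0] at htsM'
    have : f L ≤ max (dist (σ 0) (τ 0)) (dist (σ L) (τ L)) := le_max_right _ _
    rw [htsM'] at this; exact absurd this (not_le.2 hMgt)
  have hts0' : 0 < ts := lt_of_le_of_ne hts0 (Ne.symm hne0)
  have htsL' : ts < L := lt_of_le_of_ne htsL hneL
  set ε := min ts (L - ts) with hε
  have hε0 : 0 < ε := lt_min hts0' (by linarith)
  have hεts : ε ≤ ts := min_le_left _ _
  have hεL : ε ≤ L - ts := min_le_right _ _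
  have hsmem : ts - ε ∈ Icc 0 L := ⟨by linarith, by linarith⟩
  have humem : ts + ε ∈ Icc 0 L := ⟨by linarith, by linarith⟩
  have htsmem : ts ∈ Icc 0 L := ⟨hts0, htsL⟩
  -- midpoint estimate
  have hd1 : dist (σ (ts - ε)) (σ ts) = dist (σ (ts - ε)) (σ (ts + ε)) / 2 := by
    rw [hσ _ hsmem _ htsmem, hσ _ hsmem _ humem]
    rw [abs_of_nonpos (by linarith), abs_of_nonpos (by linarith)]; ring
  have hd2 : dist (σ ts) (σ (ts + ε)) = dist (σ (ts - ε)) (σ (ts + ε)) / 2 := by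
    rw [hσ _ htsmem _ humem, hσ _ hsmem _ humem]
    rw [abs_of_nonpos (by linarith), abs_of_nonpos (by linarith)]; ring
  have hd1' : dist (τ (ts - ε)) (τ ts) = dist (τ (ts - ε)) (τ (ts + ε)) / 2 := by
    rw [hτ _ hsmem _ htsmem, hτ _ hsmem _ humem]
    rw [abs_of_nonpos (by linarith), abs_of_nonpos (by linarith)]; ring
  have hd2' : dist (τ ts) (τ (ts + ε)) = dist (τ (ts - ε)) (τ (ts + ε)) / 2 := by
    rw [hτ _ htsmem _ humem, hτ _ hsmem _ humem]
    rw [abs_of_nonpos (by linarith), abs_of_nonpos (by linarith)]; ring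
  have hmid : dist (σ ts) (τ ts) ≤ (dist (σ (ts - ε)) (τ (ts - ε)) + dist (σ (ts + ε)) (τ (ts + ε))) / 2 :=
    cat0_midpoint hX (σ (ts - ε)) (σ (ts + ε)) (τ (ts - ε)) (τ (ts + ε)) (σ ts) (τ ts)
      hd1 hd2 hd1' hd2'
  have hlt : f (ts - ε) < M := by
    have hnotin : (ts - ε) ∉ A := fun hin => absurd (csInf_le hAbdd hin) (by push_neg; linarith)
    have h1 : f (ts - ε) ≤ M := hmax hsmem
    rcases lt_or_eq_of_le h1 with h | h
    · exact h
    · exact absurd ⟨hsmem, h⟩ hnotin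
  have hle : f (ts + ε) ≤ M := hmax humem
  have : M ≤ (f (ts - ε) + f (ts + ε)) / 2 := by rw [← htsM']; exact hmid
  linarith

end Comparison

section HypComparison

variable {X : Type*} [MetricSpace X]

lemma hyp_comparison (hG : GeodesicSpace X) {δ : ℝ} (hδ : GromovHyperbolic X δ)
    {L D : ℝ} {σ τ : ℝ → X}
    (hσ : IsGeodesicOn σ (Icc 0 L)) (hτ : IsGeodesicOn τ (Icc 0 L)) (hL : 0 ≤ L)
    (hD : 0 ≤ D) (h0 : dist (σ 0) (τ 0) ≤ D) (hLend : dist (σ L) (τ L) ≤ D) :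
    ∀ t ∈ Icc 0 L, dist (σ t) (τ t) ≤ 5 * D + 4 * δ := by
  obtain ⟨hδ0, slim⟩ := hδ
  intro t ht
  obtain ⟨ht0, htL⟩ := ht
  have hmem0 : (0:ℝ) ∈ Icc 0 L := ⟨le_refl _, hL⟩
  have hmemL : L ∈ Icc 0 L := ⟨hL, le_refl _⟩
  have htmem : t ∈ Icc 0 L := ⟨ht0, htL⟩
  set x := σ 0 with hx
  set y := σ L with hy
  set x' := τ 0 with hx'
  set y' := τ L with hy'
  have hLxy : dist x y = L := by
    rw [hx, hy, hσ 0 hmem0 L hmemL, abs_of_nonpos (by linarith)]; ring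
  have hLxy' : dist x' y' = L := by
    rw [hx', hy', hτ 0 hmem0 L hmemL, abs_of_nonpos (by linarith)]; ring
  have hσseg : IsGeodesicSegment σ 0 (dist x y) x y := by
    refine ⟨dist_nonneg, rfl, ?_, ?_⟩
    · rw [hLxy]
    · rw [hLxy]; exact hσ
  -- distances from basepoints
  have hdistt : dist x (σ t) = t := by
    rw [hx, hσ 0 hmem0 t htmem, abs_of_nonpos (by linarith)]; ring
  have hdistt' : dist x' (τ t) = t := by
    rw [hx', hτ 0 hmem0 t htmem, abs_of_nonpos (by linarith)]; ring
  have hdisty : dist (σ t) y = L - t := by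
    rw [hy, hσ t htmem L hmemL, abs_of_nonpos (by linarith)]; ring
  have hdisty' : dist (τ t) y' = L - t := by
    rw [hy', hτ t htmem L hmemL, abs_of_nonpos (by linarith)]; ring
  -- auxiliary geodesics
  obtain ⟨β, hβseg⟩ := hG x' y
  obtain ⟨η, hηseg⟩ := hG x' x
  obtain ⟨e, heseg⟩ := hG y y'
  obtain ⟨hβ0d, hβ0, hβL, hβ⟩ := hβseg
  obtain ⟨hη0d, hη0, hηL, hη⟩ := hηseg
  obtain ⟨he0d, he0, heL, he⟩ := heseg
  have hηseg2 : IsGeodesicSegment η 0 (dist x' x) x' x := ⟨hη0d, hη0, hηL, hη⟩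
  have heseg2 : IsGeodesicSegment e 0 (dist y y') y y' := ⟨he0d, he0, heL, he⟩
  -- side y → x' : reversal of β
  set β2 : ℝ → X := fun s => β (dist x' y - s) with hβ2
  have hβ2seg : IsGeodesicSegment β2 0 (dist y x') y x' := by
    refine ⟨dist_nonneg, ?_, ?_, ?_⟩
    · simp only [hβ2, sub_zero]; exact hβL
    · simp only [hβ2, dist_comm y x', sub_self]; exact hβ0
    · rw [dist_comm y x']
      exact isGeodesicOn_reverse hβ
  have slim1 := slim x y x' σ β2 η hσseg hβ2seg hηseg2 t (by rw [hLxy]; exact htmem)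
  obtain ⟨p, hp, hdp⟩ := slim1
  rcases hp with hp | hp
  · -- p on side y–x' (i.e. on β)
    obtain ⟨s, hs, hps⟩ := hp
    -- p = β (dist x' y - s), lies on β
    set s' := dist x' y - s with hs'
    have hs'mem : s' ∈ Icc 0 (dist x' y) := by
      constructor
      · rw [hs']; rw [dist_comm x' y] at *; linarith [hs.2]
      · rw [hs']; linarith [hs.1]
    have hps' : p = β s' := by rw [← hps]
    -- second triangle x' y y' with sides β, e, reverse τ
    set τ2 : ℝ → X := fun s => τ (L - s) with hτ2
    have hτ2seg : IsGeodesicSegment τ2 0 (dist y' x') y' x' := by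
      refine ⟨dist_nonneg, ?_, ?_, ?_⟩
      · simp only [hτ2, sub_zero]; rfl
      · have : dist y' x' = L := by rw [dist_comm y' x']; exact hLxy'
        simp only [hτ2, this, sub_self]; rfl
      · have : dist y' x' = L := by rw [dist_comm y' x']; exact hLxy'
        rw [this]
        exact isGeodesicOn_reverse hτ
    have hβseg' : IsGeodesicSegment β 0 (dist x' y) x' y := ⟨hβ0d, hβ0, hβL, hβ⟩
    have slim2 := slim x' y y' β e τ2 hβseg' heseg2 hτ2seg s' hs'mem
    obtain ⟨q, hq, hdq⟩ := slim2
    rcases hq with hq | hq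
    · -- q on side y–y' (short side)
      obtain ⟨r, hr, hqr⟩ := hq
      have hqy : dist q y ≤ D := by
        have : dist (e 0) (e r) = |0 - r| := he 0 ⟨le_refl _, dist_nonneg⟩ r hr
        rw [he0] at this
        have h1 : dist y q = r := by
          rw [← hqr, this, abs_of_nonpos (by linarith [hr.1])]; ring
        rw [dist_comm]
        rw [h1]
        calc r ≤ dist y y' := hr.2
          _ ≤ D := by rw [hy, hy']; exact hLend
      have hclose : dist (σ t) y ≤ 2 * δ + D := by
        calc dist (σ t) y ≤ dist (σ t) p + dist p q + dist q y := dist_triangle4 _ _ _ _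
          _ ≤ δ + δ + D := by
              have := hdq
              rw [← hps'] at this
              exact add_le_add (add_le_add hdp this) hqy
          _ = 2 * δ + D := by ring
      rw [hdisty] at hclose
      calc dist (σ t) (τ t) ≤ dist (σ t) y + dist y y' + dist y' (τ t) := dist_triangle4 _ _ _ _
        _ ≤ (2 * δ + D) + D + (2 * δ + D) := by
            refine add_le_add (add_le_add ?_ ?_) ?_
            · rw [hdisty]; exact hclose
            · rw [hy, hy']; exact hLend
            · rw [dist_comm]; rw [hdisty']; exact hclose
        _ ≤ 5 * D + 4 * δ := by linarith
    · -- q on reversed τ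
      obtain ⟨r, hr, hqr⟩ := hq
      set u := L - r with hu
      have hrL : dist y' x' = L := by rw [dist_comm y' x']; exact hLxy'
      have humem : u ∈ Icc 0 L := by
        constructor
        · rw [hu]; rw [hrL] at hr; linarith [hr.2]
        · rw [hu]; linarith [hr.1]
      have hqτ : q = τ u := by rw [← hqr]
      have hστu : dist (σ t) (τ u) ≤ 2 * δ := by
        calc dist (σ t) (τ u) ≤ dist (σ t) p + dist p (τ u) := dist_triangle _ _ _
          _ ≤ δ + δ := by
              refine add_le_add hdp ?_
              rw [hps', ← hqτ]
              exact hdq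
          _ = 2 * δ := by ring
      have hdistu' : dist x' (τ u) = u := by
        rw [hτ 0 hmem0 u humem, abs_of_nonpos (by linarith [humem.1])]
        · ring
      have habs : |u - t| ≤ D + 2 * δ := by
        rw [abs_le]
        constructor
        · -- t - u ≤ ...  i.e.  -(D+2δ) ≤ u - t
          have h1 : dist x (σ t) ≤ dist x x' + dist x' (τ u) + dist (τ u) (σ t) :=
            dist_triangle4 _ _ _ _
          rw [hdistt, hdistu'] at h1
          have hxx' : dist x x' ≤ D := by rw [hx, hx']; exact h0
          have h2 : dist (τ u) (σ t) ≤ 2 * δ := by rw [dist_comm]; exact hστu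
          linarith
        · have h1 : dist x' (τ u) ≤ dist x' x + dist x (σ t) + dist (σ t) (τ u) :=
            dist_triangle4 _ _ _ _
          rw [hdistt, hdistu'] at h1
          have hxx' : dist x' x ≤ D := by rw [dist_comm, hx, hx']; exact h0
          linarith
      have hτut : dist (τ u) (τ t) = |u - t| := hτ u humem t htmem
      calc dist (σ t) (τ t) ≤ dist (σ t) (τ u) + dist (τ u) (τ t) := dist_triangle _ _ _
        _ ≤ 2 * δ + (D + 2 * δ) := by rw [hτut]; exact add_le_add hστu habs
        _ ≤ 5 * D + 4 * δ := by linarith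
  · -- p on side x'–x (short side)
    obtain ⟨s, hs, hps⟩ := hp
    have hpx : dist p x ≤ D := by
      have : dist (η s) (η (dist x' x)) = |s - dist x' x| :=
        hη s hs (dist x' x) ⟨dist_nonneg, le_refl _⟩
      rw [hηL] at this
      rw [← hps, this, abs_of_nonpos (by linarith [hs.2])]
      have : dist x' x ≤ D := by rw [dist_comm, hx, hx']; exact h0
      linarith [hs.1]
    have htsmall : t ≤ δ + D := by
      have : dist x (σ t) ≤ dist (σ t) p + dist p x := by
        rw [dist_comm x (σ t)]; exact dist_triangle _ _ _
      rw [hdistt] at this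
      linarith [add_le_add hdp hpx]
    calc dist (σ t) (τ t) ≤ dist (σ t) x + dist x x' + dist x' (τ t) := dist_triangle4 _ _ _ _
      _ ≤ (δ + D) + D + (δ + D) := by
          refine add_le_add (add_le_add ?_ ?_) ?_
          · rw [dist_comm, hdistt]; exact htsmall
          · rw [hx, hx']; exact h0
          · rw [hdistt']; exact htsmall
      _ ≤ 5 * D + 4 * δ := by linarith

end HypComparison

section UnifiedComparison

variable {X : Type*} [MetricSpace X]

lemma npc_comparison (hNPC : NPCSpace X) :
    ∃ K : ℝ, 0 ≤ K ∧ ∀ L : ℝ, 0 ≤ L → ∀ σ τ : ℝ → X,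
      IsGeodesicOn σ (Icc 0 L) → IsGeodesicOn τ (Icc 0 L) →
      ∀ D : ℝ, 0 ≤ D → dist (σ 0) (τ 0) ≤ D → dist (σ L) (τ L) ≤ D →
      ∀ t ∈ Icc 0 L, dist (σ t) (τ t) ≤ 5 * D + K := by
  obtain ⟨hgeo, hcase⟩ := hNPC
  rcases hcase with ⟨_, hcat⟩ | ⟨_, δ, hδ⟩
  · refine ⟨0, le_refl 0, fun L hL σ τ hσ hτ D hD h0 hLe t ht => ?_⟩
    have := cat0_comparison hcat hσ hτ hL t ht
    have hm : max (dist (σ 0) (τ 0)) (dist (σ L) (τ L)) ≤ D := max_le h0 hLe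
    calc dist (σ t) (τ t) ≤ max (dist (σ 0) (τ 0)) (dist (σ L) (τ L)) := this
      _ ≤ D := hm
      _ ≤ 5 * D + 0 := by linarith
  · refine ⟨4 * δ, by linarith [hδ.1], fun L hL σ τ hσ hτ D hD h0 hLe t ht => ?_⟩
    exact hyp_comparison hgeo hδ hσ hτ hL hD h0 hLe t ht

end UnifiedComparison

section MainGeom

variable {X : Type*} [MetricSpace X] {G : Type*} [Group G] [MulAction G X]

lemma mem_endStabilizer_of_bddOrbit (hNPC : NPCSpace X) (hiso : IsometricAction G X)
    {h : G} {γ : ℝ → X} (hat : AttractsTo h γ) {a : G} {D : ℝ}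
    (hD : ∀ k : ℕ, dist (a • h ^ k • γ 0) (h ^ k • γ 0) ≤ D) :
    a ∈ endStabilizer hiso γ := by
  obtain ⟨K, hK0, hcomp⟩ := npc_comparison hNPC
  obtain ⟨hray, hconv⟩ := hat
  obtain ⟨htend, C, hC⟩ := hconv (γ 0)
  have hD0 : 0 ≤ D := le_trans dist_nonneg (hD 0)
  -- choose geodesics from γ 0 to h^n • γ 0
  have hex : ∀ n : ℕ, ∃ σ : ℝ → X,
      IsGeodesicSegment σ 0 (dist (γ 0) (h ^ n • γ 0)) (γ 0) (h ^ n • γ 0) :=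
    fun n => hNPC.1 (γ 0) (h ^ n • γ 0)
  choose σ hσ using hex
  show AsympRays (fun t => a • γ t) γ
  refine ⟨C + (5 * D + K) + C, fun t ht => ?_⟩
  have hCn : ∀ᶠ n in atTop, dist (σ n t) (γ t) ≤ C := hC t ht σ hσ
  have hLn : ∀ᶠ n in atTop, t ≤ dist (γ 0) (h ^ n • γ 0) := htend.eventually_ge_atTop t
  obtain ⟨n, h1, h2⟩ := (hCn.and hLn).exists
  set L := dist (γ 0) (h ^ n • γ 0) with hLdef
  obtain ⟨hL0, hσ0, hσL, hσgeo⟩ := hσ n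
  -- the translated geodesic
  set τ : ℝ → X := fun s => a • σ n s with hτdef
  have hτgeo : IsGeodesicOn τ (Icc 0 L) := by
    intro u hu v hv
    have : dist (τ u) (τ v) = dist (σ n u) (σ n v) := (hiso a).dist_eq _ _
    rw [this]
    exact hσgeo u hu v hv
  have he0 : dist (σ n 0) (τ 0) ≤ D := by
    have hγ0 : h ^ 0 • γ 0 = γ 0 := by rw [pow_zero, one_smul]
    have := hD 0
    rw [hγ0] at this
    rw [hτdef]
    simp only []
    rw [hσ0, dist_comm]
    exact this
  have heL : dist (σ n L) (τ L) ≤ D := by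
    rw [hτdef]
    simp only []
    rw [hσL, dist_comm]
    exact hD n
  have hmid : dist (σ n t) (τ t) ≤ 5 * D + K :=
    hcomp L hL0 (σ n) τ hσgeo hτgeo D hD0 he0 heL t ⟨ht, h2⟩
  have hfirst : dist (a • γ t) (τ t) = dist (γ t) (σ n t) := (hiso a).dist_eq _ _
  calc dist (a • γ t) (γ t)
      ≤ dist (a • γ t) (τ t) + dist (τ t) (σ n t) + dist (σ n t) (γ t) := dist_triangle4 _ _ _ _
    _ ≤ C + (5 * D + K) + C := by
        refine add_le_add (add_le_add ?_ ?_) h1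
        · rw [hfirst, dist_comm]; exact h1
        · rw [dist_comm]; exact hmid

end MainGeom

section CosetCount

variable {G : Type*} [Group G]

/-- Map on left coset spaces induced by an inclusion `K ≤ M`. -/
noncomputable def cosetMap (H K M : Subgroup G) (hKM : K ≤ M) :
    K ⧸ H.subgroupOf K → M ⧸ H.subgroupOf M :=
  Quotient.map' (fun k => (⟨k.1, hKM k.2⟩ : M)) (by
    intro x y hxy
    rw [QuotientGroup.leftRel_apply] at hxy ⊢
    simpa [Subgroup.mem_subgroupOf] using hxy)

lemma cosetMap_injective (H K M : Subgroup G) (hKM : K ≤ M) :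
    Function.Injective (cosetMap H K M hKM) := by
  intro q1 q2
  induction q1 using Quotient.inductionOn'
  induction q2 using Quotient.inductionOn'
  rename_i x y
  intro hEq
  simp only [cosetMap, Quotient.map'_mk''] at hEq
  rw [Quotient.eq''] at hEq ⊢
  rw [QuotientGroup.leftRel_apply] at hEq ⊢
  simpa [Subgroup.mem_subgroupOf] using hEq

lemma relindex_card_eq (H K : Subgroup G) :
    H.relIndex K = Nat.card (K ⧸ H.subgroupOf K) := rfl

lemma relindex_le_of_le_ambient (H K M : Subgroup G) (hKM : K ≤ M)
    (hfin : Finite (M ⧸ H.subgroupOf M)) : H.relIndex K ≤ H.relIndex M := by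
  rw [relindex_card_eq, relindex_card_eq]
  exact Nat.card_le_card_of_injective _ (cosetMap_injective H K M hKM)

lemma mul_cover_of_relindex_eq (H K M : Subgroup G) (hKM : K ≤ M)
    (hfin : Finite (M ⧸ H.subgroupOf M)) (heq : H.relIndex K = H.relIndex M) :
    ∀ u ∈ M, ∃ k ∈ K, ∃ h ∈ H, u = k * h := by
  have hbij : Function.Bijective (cosetMap H K M hKM) := by
    apply Function.Injective.bijective_of_nat_card_le (cosetMap_injective H K M hKM)
    rw [← relindex_card_eq, ← relindex_card_eq, heq]
  intro u hu
  obtain ⟨q, hq⟩ := hbij.2 (QuotientGroup.mk ⟨u, hu⟩)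
  obtain ⟨k, rfl⟩ := Quotient.exists_rep q
  have : (QuotientGroup.mk (⟨k.1, hKM k.2⟩ : M) : M ⧸ H.subgroupOf M)
      = (QuotientGroup.mk (⟨u, hu⟩ : M) : M ⧸ H.subgroupOf M) := by
    rw [← hq]
    rfl
  rw [QuotientGroup.eq] at this
  rw [Subgroup.mem_subgroupOf] at this
  refine ⟨k.1, k.2, k.1⁻¹ * u, ?_, by group⟩
  simpa using this

end CosetCount

section FinQuot

variable {G : Type*} [Group G] [TopologicalSpace G] [IsTopologicalGroup G]

lemma finite_quot_of_isOpen_isCompact (H M : Subgroup G)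
    (hH : IsOpen (H : Set G)) (hM : IsCompact (M : Set G)) :
    Finite (M ⧸ H.subgroupOf M) := by
  haveI : CompactSpace M := isCompact_iff_compactSpace.mp hM
  apply Subgroup.quotient_finite_of_isOpen
  have : ((H.subgroupOf M : Subgroup M) : Set M) = (Subtype.val) ⁻¹' (H : Set G) := by
    ext x
    simp [Subgroup.mem_subgroupOf]
  rw [this]
  exact hH.preimage continuous_subtype_val

end FinQuot

section Levels

variable {G : Type*} [Group G]

/-- The subgroup `g^m V g^{-m}` (the "level `m`" conjugate of `V`). -/
def lvSet (g : G) (V : Subgroup G) (m : ℤ) : Subgroup G :=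
  V.comap (MulAut.conj (g ^ (-m))).toMonoidHom

lemma mem_lvSet {g x : G} {V : Subgroup G} {m : ℤ} :
    x ∈ lvSet g V m ↔ g ^ (-m) * x * g ^ m ∈ V := by
  rw [lvSet, Subgroup.mem_comap]
  have h1 : (MulAut.conj (g ^ (-m))).toMonoidHom x = g ^ (-m) * x * (g ^ (-m))⁻¹ := rfl
  rw [h1]
  simp [zpow_neg, inv_inv]

lemma lvSet_conj_mem {g x : G} {V : Subgroup G} {m j : ℤ} :
    g ^ j * x * (g ^ j)⁻¹ ∈ lvSet g V m ↔ x ∈ lvSet g V (m - j) := by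
  rw [mem_lvSet, mem_lvSet]
  have h2 : g ^ (-m) * (g ^ j * x * (g ^ j)⁻¹) * g ^ m = g ^ (-(m - j)) * x * g ^ (m - j) := by
    group
  rw [h2]

/-- Intersection of the levels `a ≤ m ≤ b`. -/
def IV (g : G) (V : Subgroup G) (a b : ℤ) : Subgroup G :=
  ⨅ m ∈ Finset.Icc a b, lvSet g V m

lemma mem_IV {g x : G} {V : Subgroup G} {a b : ℤ} :
    x ∈ IV g V a b ↔ ∀ m : ℤ, a ≤ m → m ≤ b → x ∈ lvSet g V m := by
  simp only [IV, Subgroup.mem_iInf, Finset.mem_Icc, and_imp]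

lemma IV_le_lvSet {g : G} {V : Subgroup G} {a b m : ℤ} (h1 : a ≤ m) (h2 : m ≤ b) :
    IV g V a b ≤ lvSet g V m := fun _ hx => mem_IV.1 hx m h1 h2

lemma IV_mono {g : G} {V : Subgroup G} {a b a' b' : ℤ} (h1 : a' ≤ a) (h2 : b ≤ b') :
    IV g V a' b' ≤ IV g V a b :=
  fun _ hx => mem_IV.2 fun m hm1 hm2 => mem_IV.1 hx m (le_trans h1 hm1) (le_trans hm2 h2)

lemma IV_inf {g : G} {V : Subgroup G} {a b a' b' : ℤ} (h1 : a ≤ a') (h2 : a' ≤ b + 1)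
    (h3 : b ≤ b') : IV g V a b ⊓ IV g V a' b' = IV g V a b' := by
  apply le_antisymm
  · intro x hx
    rw [Subgroup.mem_inf] at hx
    rw [mem_IV]
    intro m hm1 hm2
    by_cases hmb : m ≤ b
    · exact mem_IV.1 hx.1 m hm1 hmb
    · push_neg at hmb
      exact mem_IV.1 hx.2 m (by omega) hm2
  · intro x hx
    rw [Subgroup.mem_inf]
    exact ⟨IV_mono (le_refl a) (by omega) hx, IV_mono (by omega) (le_refl b') hx⟩

/-- Conjugation shift of a subgroup. -/
def Shc (g : G) (j : ℤ) (H : Subgroup G) : Subgroup G :=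
  H.comap (MulAut.conj (g ^ j)).toMonoidHom

lemma mem_Shc {g x : G} {j : ℤ} {H : Subgroup G} :
    x ∈ Shc g j H ↔ g ^ j * x * (g ^ j)⁻¹ ∈ H := by
  rw [Shc, Subgroup.mem_comap]
  rfl

lemma Shc_IV {g : G} {V : Subgroup G} {j a b : ℤ} :
    Shc g j (IV g V a b) = IV g V (a - j) (b - j) := by
  ext x
  rw [mem_Shc, mem_IV, mem_IV]
  constructor
  · intro hx m hm1 hm2
    have := hx (m + j) (by omega) (by omega)
    rw [lvSet_conj_mem] at this
    simpa using this
  · intro hx m hm1 hm2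
    rw [lvSet_conj_mem]
    exact hx (m - j) (by omega) (by omega)

lemma relindex_conj (A B : Subgroup G) (c : G) :
    (A.comap (MulAut.conj c).toMonoidHom).relIndex (B.comap (MulAut.conj c).toMonoidHom)
      = A.relIndex B := by
  rw [Subgroup.relIndex_comap]
  congr 1
  exact Subgroup.map_comap_eq_self_of_surjective (MulAut.conj c).surjective B

lemma relindex_Shc {g : G} {j : ℤ} (A B : Subgroup G) :
    (Shc g j A).relIndex (Shc g j B) = A.relIndex B :=
  relindex_conj A B (g ^ j)

end Levels

section LevelsTop

variable {G : Type*} [Group G] [TopologicalSpace G] [IsTopologicalGroup G]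

lemma lvSet_isOpen {g : G} {V : Subgroup G} (hV : IsOpen (V : Set G)) (m : ℤ) :
    IsOpen ((lvSet g V m : Subgroup G) : Set G) := by
  have : ((lvSet g V m : Subgroup G) : Set G)
      = (fun x => g ^ (-m) * x * (g ^ (-m))⁻¹) ⁻¹' (V : Set G) := rfl
  rw [this]
  exact hV.preimage (by continuity)

lemma lvSet_isCompact {g : G} {V : Subgroup G} (hV : IsCompact (V : Set G)) (m : ℤ) :
    IsCompact ((lvSet g V m : Subgroup G) : Set G) := by
  have : ((lvSet g V m : Subgroup G) : Set G)
      = (fun y => (g ^ (-m))⁻¹ * y * g ^ (-m)) '' (V : Set G) := by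
    ext x
    constructor
    · intro hx
      refine ⟨g ^ (-m) * x * (g ^ (-m))⁻¹, hx, by group⟩
    · rintro ⟨v, hv, rfl⟩
      show g ^ (-m) * ((g ^ (-m))⁻¹ * v * g ^ (-m)) * (g ^ (-m))⁻¹ ∈ V
      have : g ^ (-m) * ((g ^ (-m))⁻¹ * v * g ^ (-m)) * (g ^ (-m))⁻¹ = v := by group
      rw [this]; exact hv
  rw [this]
  exact hV.image (by continuity)

lemma IV_coe_iInter {g : G} {V : Subgroup G} {a b : ℤ} :
    ((IV g V a b : Subgroup G) : Set G)
      = ⋂ m ∈ Finset.Icc a b, ((lvSet g V m : Subgroup G) : Set G) := by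
  simp only [IV, Subgroup.coe_iInf]

lemma IV_isOpen {g : G} {V : Subgroup G} (hV : IsOpen (V : Set G)) (a b : ℤ) :
    IsOpen ((IV g V a b : Subgroup G) : Set G) := by
  rw [IV_coe_iInter]
  exact isOpen_biInter_finset fun m _ => lvSet_isOpen hV m

lemma IV_isCompact [T2Space G] {g : G} {V : Subgroup G} (hV : IsCompact (V : Set G))
    {a b : ℤ} (hab : a ≤ b) : IsCompact ((IV g V a b : Subgroup G) : Set G) := by
  apply IsCompact.of_isClosed_subset (lvSet_isCompact hV a)
  · rw [IV_coe_iInter]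
    apply isClosed_biInter
    intro m _
    exact (lvSet_isCompact hV m).isClosed
  · exact IV_le_lvSet (le_refl a) hab

end LevelsTop

section Stab

lemma antitone_nat_stabilizes {c : ℕ → ℕ} (h : ∀ n, c (n + 1) ≤ c n) :
    ∃ N : ℕ, ∀ n : ℕ, N ≤ n → c n = c N := by
  have hanti : Antitone c := antitone_nat_of_succ_le h
  obtain ⟨N, hN⟩ := Nat.sInf_mem (Set.range_nonempty c)
  refine ⟨N, fun n hn => ?_⟩
  have h1 : c n ≤ c N := hanti hn
  have h2 : sInf (Set.range c) ≤ c n := Nat.sInf_le ⟨n, rfl⟩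
  omega

end Stab

section WillisTA

variable {G : Type*} [Group G] [TopologicalSpace G] [IsTopologicalGroup G] [T2Space G]

lemma IVe (g : G) (V : Subgroup G) {a b a' b' : ℤ} (h1 : a = a') (h2 : b = b') :
    IV g V a b = IV g V a' b' := by rw [h1, h2]

lemma willis_TA (g : G) (V : Subgroup G) (hVo : IsOpen (V : Set G))
    (hVc : IsCompact (V : Set G)) :
    ∃ O : Subgroup G, IsOpen (O : Set G) ∧ ∀ u ∈ O, ∃ a b : G, u = a * b ∧
      (∀ m : ℤ, 0 ≤ m → a ∈ lvSet g V m) ∧ (∀ m : ℤ, m ≤ 0 → b ∈ lvSet g V m) := by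
  classical
  set c : ℕ → ℕ := fun n => (IV g V 0 ((n : ℤ) + 1)).relIndex (IV g V 0 (n : ℤ)) with hc
  have hstep : ∀ n : ℕ, c (n + 1) ≤ c n := by
    intro n
    set z : ℤ := (n : ℤ) with hz
    have hcn1 : c (n + 1) = (IV g V 0 (z + 2)).relIndex (IV g V 0 (z + 1)) := by
      have e1 : IV g V 0 ((((n + 1 : ℕ)) : ℤ) + 1) = IV g V 0 (z + 2) :=
        IVe g V rfl (by push_cast; ring)
      have e2 : IV g V 0 (((n + 1 : ℕ)) : ℤ) = IV g V 0 (z + 1) :=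
        IVe g V rfl (by push_cast; ring)
      show (IV g V 0 ((((n + 1 : ℕ)) : ℤ) + 1)).relIndex (IV g V 0 (((n + 1 : ℕ)) : ℤ)) = _
      rw [e1, e2]
    set H := IV g V 1 (z + 2) with hH
    set K := IV g V 0 (z + 1) with hK
    set M := IV g V 1 (z + 1) with hM
    have hKM : K ≤ M := IV_mono (by omega) (le_refl _)
    have hfin : Finite (M ⧸ H.subgroupOf M) :=
      finite_quot_of_isOpen_isCompact H M (IV_isOpen hVo _ _) (IV_isCompact hVc (by omega))
    have hHK : H ⊓ K = IV g V 0 (z + 2) := by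
      rw [inf_comm]
      exact IV_inf (by omega) (by omega) (by omega)
    have step2 : (IV g V 0 (z + 2)).relIndex K = H.relIndex K := by
      rw [← hHK]
      exact Subgroup.inf_relIndex_right H K
    have step3 : H.relIndex M = c n := by
      have e1 : H = Shc g (-1) (IV g V 0 (z + 1)) := by
        rw [Shc_IV]; exact IVe g V (by omega) (by omega)
      have e2 : M = Shc g (-1) (IV g V 0 z) := by
        rw [Shc_IV]; exact IVe g V (by omega) (by omega)
      rw [e1, e2, relindex_Shc]
    calc c (n + 1) = (IV g V 0 (z + 2)).relIndex K := hcn1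
      _ = H.relIndex K := step2
      _ ≤ H.relIndex M := relindex_le_of_le_ambient H K M hKM hfin
      _ = c n := step3
  obtain ⟨N, hN⟩ := antitone_nat_stabilizes hstep
  set cst : ℕ := c N with hcst
  -- relindex along chains
  have chainPow : ∀ (k n : ℕ), N ≤ n →
      (IV g V 0 ((n : ℤ) + (k : ℤ))).relIndex (IV g V 0 (n : ℤ)) = cst ^ k := by
    intro k
    induction k with
    | zero =>
      intro n hn
      have : IV g V 0 ((n : ℤ) + (0 : ℕ)) = IV g V 0 (n : ℤ) := IVe g V rfl (by push_cast; ring)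
      rw [this, Subgroup.relIndex_self, pow_zero]
    | succ k ih =>
      intro n hn
      set z : ℤ := (n : ℤ) with hz
      have hAB : IV g V 0 (z + (k : ℤ) + 1) ≤ IV g V 0 (z + (k : ℤ)) :=
        IV_mono (le_refl _) (by omega)
      have hBC : IV g V 0 (z + (k : ℤ)) ≤ IV g V 0 z := IV_mono (le_refl _) (by omega)
      have htower := Subgroup.relIndex_mul_relIndex
        (H := IV g V 0 (z + (k : ℤ) + 1)) (K := IV g V 0 (z + (k : ℤ))) (L := IV g V 0 z) hAB hBC
      have h1 : (IV g V 0 (z + (k : ℤ) + 1)).relIndex (IV g V 0 (z + (k : ℤ))) = cst := by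
        have e1 : IV g V 0 (z + (k : ℤ) + 1) = IV g V 0 (((n + k : ℕ) : ℤ) + 1) :=
          IVe g V rfl (by push_cast; ring)
        have e2 : IV g V 0 (z + (k : ℤ)) = IV g V 0 ((n + k : ℕ) : ℤ) :=
          IVe g V rfl (by push_cast; ring)
        rw [e1, e2]
        exact hN (n + k) (by omega)
      have h2 : (IV g V 0 (z + (k : ℤ))).relIndex (IV g V 0 z) = cst ^ k := ih n hn
      have e3 : IV g V 0 (z + ((k + 1 : ℕ) : ℤ)) = IV g V 0 (z + (k : ℤ) + 1) :=
        IVe g V rfl (by push_cast; ring)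
      rw [e3, ← htower, h1, h2]
      ring
  -- the key decomposition at stage k
  set N' : ℤ := (N : ℤ) with hN'
  have hN'0 : 0 ≤ N' := Int.natCast_nonneg N
  have main : ∀ (k : ℕ) (u : G), u ∈ IV g V 0 N' →
      ∃ a b : G, a ∈ IV g V 0 (N' + (k : ℤ)) ∧ b ∈ IV g V (-(k : ℤ)) N' ∧ u = a * b := by
    intro k u hu
    set H := IV g V 0 (N' + (k : ℤ)) with hH
    set K := IV g V (-(k : ℤ)) N' with hK
    set M := IV g V 0 N' with hM
    have hKM : K ≤ M := IV_mono (by omega) (le_refl _)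
    have hfin : Finite (M ⧸ H.subgroupOf M) :=
      finite_quot_of_isOpen_isCompact H M (IV_isOpen hVo _ _) (IV_isCompact hVc (by omega))
    have hHM : H.relIndex M = cst ^ k := chainPow k N (le_refl N)
    have hHKinf : H ⊓ K = IV g V (-(k : ℤ)) (N' + (k : ℤ)) := by
      rw [inf_comm]
      exact IV_inf (by omega) (by omega) (by omega)
    have hHK : H.relIndex K = cst ^ k := by
      rw [← Subgroup.inf_relIndex_right H K, hHKinf]
      have e1 : IV g V (-(k : ℤ)) (N' + (k : ℤ)) = Shc g (k : ℤ) (IV g V 0 (N' + 2 * (k : ℤ))) := by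
        rw [Shc_IV]; exact IVe g V (by omega) (by omega)
      have e2 : K = Shc g (k : ℤ) (IV g V 0 (N' + (k : ℤ))) := by
        rw [Shc_IV]; exact IVe g V (by omega) (by omega)
      rw [e1, e2, relindex_Shc]
      have e3 : IV g V 0 (N' + 2 * (k : ℤ)) = IV g V 0 (((N + k : ℕ) : ℤ) + (k : ℤ)) :=
        IVe g V rfl (by push_cast; ring)
      have e4 : IV g V 0 (N' + (k : ℤ)) = IV g V 0 ((N + k : ℕ) : ℤ) :=
        IVe g V rfl (by push_cast; ring)
      rw [e3, e4]
      exact chainPow k (N + k) (by omega)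
    have hcover := mul_cover_of_relindex_eq H K M hKM hfin (by rw [hHK, hHM])
    obtain ⟨q, hq, h, hh, hqh⟩ := hcover u⁻¹ (inv_mem hu)
    refine ⟨h⁻¹, q⁻¹, inv_mem hh, inv_mem hq, ?_⟩
    have h2 : (u⁻¹)⁻¹ = (q * h)⁻¹ := by rw [hqh]
    rw [inv_inv, mul_inv_rev] at h2
    exact h2
  -- pass to the limit by compactness
  refine ⟨IV g V 0 N', IV_isOpen hVo _ _, ?_⟩
  intro u hu
  set T : ℕ → Set (G × G) := fun k =>
    {p : G × G | p.1 ∈ IV g V 0 (N' + (k : ℤ)) ∧ p.2 ∈ IV g V (-(k : ℤ)) N' ∧ p.1 * p.2 = u}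
    with hT
  have hTsub : ∀ k, T (k + 1) ⊆ T k := by
    intro k p hp
    obtain ⟨h1, h2, h3⟩ := hp
    refine ⟨IV_mono (le_refl _) (by push_cast; omega) h1, IV_mono (by push_cast; omega) (le_refl _) h2, h3⟩
  have hTne : ∀ k, (T k).Nonempty := by
    intro k
    obtain ⟨a, b, ha, hb, hab⟩ := main k u hu
    exact ⟨(a, b), ha, hb, hab.symm⟩
  have hTclosed : ∀ k, IsClosed (T k) := by
    intro k
    have h1 : IsClosed {p : G × G | p.1 ∈ IV g V 0 (N' + (k : ℤ))} :=
      (IsCompact.isClosed (IV_isCompact hVc (by omega))).preimage continuous_fst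
    have h2 : IsClosed {p : G × G | p.2 ∈ IV g V (-(k : ℤ)) N'} :=
      (IsCompact.isClosed (IV_isCompact hVc (by omega))).preimage continuous_snd
    have h3 : IsClosed {p : G × G | p.1 * p.2 = u} :=
      isClosed_singleton.preimage continuous_mul
    have heq : T k = ({p : G × G | p.1 ∈ IV g V 0 (N' + (k : ℤ))} ∩
        {p : G × G | p.2 ∈ IV g V (-(k : ℤ)) N'}) ∩ {p : G × G | p.1 * p.2 = u} := by
      ext p
      simp only [hT, Set.mem_setOf_eq, Set.mem_inter_iff]
      tauto
    rw [heq]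
    exact (h1.inter h2).inter h3
  have hT0 : IsCompact (T 0) := by
    refine IsCompact.of_isClosed_subset
      ((IV_isCompact (g := g) hVc hN'0).prod (IV_isCompact (g := g) hVc hN'0)) (hTclosed 0) ?_
    intro p hp
    obtain ⟨h1, h2, _⟩ := hp
    exact ⟨IV_mono (le_refl _) (by omega) h1, IV_mono (by omega) (le_refl _) h2⟩
  obtain ⟨⟨a, b⟩, hab⟩ :=
    IsCompact.nonempty_iInter_of_sequence_nonempty_isCompact_isClosed T hTsub hTne hT0 hTclosed
  rw [Set.mem_iInter] at hab
  refine ⟨a, b, (hab 0).2.2.symm, ?_, ?_⟩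
  · intro m hm
    have hmem := (hab m.toNat).1
    exact IV_le_lvSet hm (by omega) hmem
  · intro m hm
    have hmem := (hab (-m).toNat).2.1
    exact IV_le_lvSet (by omega) (by omega) hmem

end WillisTA

section VanDantzig

variable {G : Type*} [Group G] [TopologicalSpace G] [IsTopologicalGroup G]
  [LocallyCompactSpace G] [TotallyDisconnectedSpace G] [T2Space G]

/-- van Dantzig: every open subgroup of a t.d.l.c. group contains a compact open
subgroup. -/
lemma exists_compactOpen_subgroup_le (U : Subgroup G) (hU : IsOpen (U : Set G)) :
    ∃ V : Subgroup G, IsCompact (V : Set G) ∧ IsOpen (V : Set G) ∧ V ≤ U := by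
  obtain ⟨s, hscomp, hs1, hsU⟩ := exists_compact_subset hU U.one_mem
  obtain ⟨W, hWclopen, hW1, hWs⟩ :=
    loc_compact_Haus_tot_disc_of_zero_dim.mem_nhds_iff.mp (isOpen_interior.mem_nhds hs1)
  have hWcomp : IsCompact W :=
    IsCompact.of_isClosed_subset hscomp hWclopen.isClosed (hWs.trans interior_subset)
  have hWU : W ⊆ (U : Set G) := hWs.trans (interior_subset.trans hsU)
  obtain ⟨A, hA1, hAW⟩ :=
    compact_open_separated_mul_left hWcomp hWclopen.isOpen (subset_refl W)
  set B := A ∩ A⁻¹ with hB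
  have hB1 : B ∈ 𝓝 (1 : G) := by
    refine Filter.inter_mem hA1 ?_
    have h2 : (fun x : G => x⁻¹) ⁻¹' A ∈ 𝓝 (1 : G) := by
      have := continuous_inv.tendsto (1 : G)
      rw [inv_one] at this
      exact this hA1
    have h3 : (fun x : G => x⁻¹) ⁻¹' A = A⁻¹ := rfl
    rwa [h3] at h2
  set H : Subgroup G :=
    { carrier := {x : G | x • W = W}
      one_mem' := one_smul _ W
      mul_mem' := by
        intro a b ha hb
        show (a * b) • W = W
        rw [mul_smul]
        rw [(hb : b • W = W), (ha : a • W = W)]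
      inv_mem' := by
        intro a ha
        show a⁻¹ • W = W
        conv_lhs => rw [← (ha : a • W = W)]
        exact inv_smul_smul a W } with hH
  have hBH : B ⊆ (H : Set G) := by
    intro b hb
    have h1 : ∀ x ∈ A, x • W ⊆ W := by
      intro x hx w hw
      obtain ⟨w0, hw0, rfl⟩ := hw
      exact hAW (Set.mul_mem_mul hx hw0)
    have hbW : b • W ⊆ W := h1 b hb.1
    have hbW' : b⁻¹ • W ⊆ W := h1 b⁻¹ (by simpa using hb.2)
    show b • W = W
    refine subset_antisymm hbW ?_
    intro w hw
    have hmem : b⁻¹ • w ∈ W := hbW' ⟨w, hw, rfl⟩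
    exact ⟨b⁻¹ • w, hmem, by simp⟩
  have hHopen : IsOpen (H : Set G) :=
    Subgroup.isOpen_of_mem_nhds H (Filter.mem_of_superset hB1 hBH)
  have hHW : (H : Set G) ⊆ W := by
    intro h hh
    have he : h • W = W := hh
    have hmem : h ∈ h • W := ⟨1, hW1, by simp⟩
    rwa [he] at hmem
  refine ⟨H, ?_, hHopen, fun x hx => hWU (hHW hx)⟩
  exact IsCompact.of_isClosed_subset hWcomp (H.isClosed_of_isOpen hHopen) hHW

end VanDantzig

end Statement6Aux

/-- For an open subgroup `U` of `G` and a hyperbolic `g ∈ G` with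
attracting point `ξ₊` (ray `γp`) and repelling point `ξ₋` (ray `γm`), the product
`U_{ξ₊}U_{ξ₋} = (U ∩ G_{ξ₊})(U ∩ G_{ξ₋})` is a neighbourhood of the identity. -/
theorem product_of_end_fixators_nhds
    {X G : Type*} [MetricSpace X] [Group G] [TopologicalSpace G]
    [IsTopologicalGroup G] [LocallyCompactSpace G] [TotallyDisconnectedSpace G] [T2Space G]
    [MulAction G X] [ContinuousSMul G X]
    (hNPC : NPCSpace X) (hiso : IsometricAction G X) (hproper : ProperAction G X)
    (g : G) (hhyp : IsHyperbolicIsom X g) (γp γm : ℝ → X)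
    (hattr : AttractsTo g γp) (hrep : AttractsTo g⁻¹ γm)
    (U : Subgroup G) (hU : IsOpen (U : Set G)) :
    ((U ⊓ endStabilizer hiso γp : Subgroup G) : Set G) *
      ((U ⊓ endStabilizer hiso γm : Subgroup G) : Set G) ∈ 𝓝 (1 : G) := by
  classical
  obtain ⟨V, hVc, hVo, hVU⟩ := exists_compactOpen_subgroup_le U hU
  obtain ⟨O, hOopen, hOdec⟩ := willis_TA g V hVo hVc
  -- uniform displacement bounds on the compact subgroup V
  have hbdd : ∀ x : X, ∃ D : ℝ, ∀ v ∈ V, dist (v • x) x ≤ D := by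
    intro x
    have hcont : Continuous fun v : G => dist (v • x) x := by
      have h1 : Continuous fun v : G => v • x := continuous_id.smul continuous_const
      exact h1.dist continuous_const
    obtain ⟨D, hD⟩ := (hVc.image hcont).bddAbove
    exact ⟨D, fun v hv => hD ⟨v, hv, rfl⟩⟩
  obtain ⟨D0, hD0⟩ := hbdd (γp 0)
  obtain ⟨D1, hD1⟩ := hbdd (γm 0)
  refine Filter.mem_of_superset (hOopen.mem_nhds O.one_mem) ?_
  intro u hu
  obtain ⟨a, b, hab, hamem, hbmem⟩ := hOdec u hu
  have haV : a ∈ V := by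
    have h0 := hamem 0 (le_refl 0)
    rw [mem_lvSet] at h0
    simpa using h0
  have hbV : b ∈ V := by
    have h0 := hbmem 0 (le_refl 0)
    rw [mem_lvSet] at h0
    simpa using h0
  -- a fixes the attracting end
  have haStab : a ∈ endStabilizer hiso γp := by
    apply mem_endStabilizer_of_bddOrbit hNPC hiso hattr (D := D0)
    intro k
    have hv : g ^ (-(k : ℤ)) * a * g ^ (k : ℤ) ∈ V :=
      mem_lvSet.mp (hamem (k : ℤ) (Int.natCast_nonneg k))
    set v := g ^ (-(k : ℤ)) * a * g ^ (k : ℤ) with hvdef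
    have hcomm : g ^ k * v = a * g ^ k := by rw [hvdef]; group
    have h1 : a • g ^ k • γp 0 = g ^ k • (v • γp 0) := by
      rw [smul_smul, smul_smul, ← hcomm, ← smul_smul, ← smul_smul]
    rw [h1]
    have h2 : dist (g ^ k • (v • γp 0)) (g ^ k • γp 0) = dist (v • γp 0) (γp 0) :=
      (hiso (g ^ k)).dist_eq _ _
    rw [h2]
    exact hD0 v hv
  -- b fixes the repelling end
  have hbStab : b ∈ endStabilizer hiso γm := by
    apply mem_endStabilizer_of_bddOrbit hNPC hiso hrep (D := D1)
    intro k
    have hw : g ^ (k : ℤ) * b * g ^ (-(k : ℤ)) ∈ V := by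
      have := hbmem (-(k : ℤ)) (by omega)
      rw [mem_lvSet] at this
      simpa using this
    set w := g ^ (k : ℤ) * b * g ^ (-(k : ℤ)) with hwdef
    have hcomm : (g⁻¹) ^ k * w = b * (g⁻¹) ^ k := by rw [hwdef]; group
    have h1 : b • (g⁻¹) ^ k • γm 0 = (g⁻¹) ^ k • (w • γm 0) := by
      rw [smul_smul, smul_smul, ← hcomm, ← smul_smul, ← smul_smul]
    rw [h1]
    have h2 : dist ((g⁻¹) ^ k • (w • γm 0)) ((g⁻¹) ^ k • γm 0) = dist (w • γm 0) (γm 0) :=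
      (hiso ((g⁻¹) ^ k)).dist_eq _ _
    rw [h2]
    exact hD1 w hw
  rw [hab]
  exact Set.mul_mem_mul
    (show a ∈ ((U ⊓ endStabilizer hiso γp : Subgroup G) : Set G) from
      Subgroup.mem_inf.mpr ⟨hVU haV, haStab⟩)
    (show b ∈ ((U ⊓ endStabilizer hiso γm : Subgroup G) : Set G) from
      Subgroup.mem_inf.mpr ⟨hVU hbV, hbStab⟩)
end
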